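/- arXiv:1907.13032 — 8 statements merged into one kernel-verified Lean document; each statement's English description precedes it below -/
import Mathlib

section
/- Let q = 3^m with m ≥ 4, Tr : GF(q) → GF(3) the trace, a ∈ GF(q)*, h ∈ GF(3), and H(a,h) = {x ∈ GF(q) : Tr(a x^2) + h = 0}. Then the difference set Δ(H(a,h)) = {s - s' : s, s' ∈ H(a,h)} equals all of GF(q). -/
open Module LinearMap.BilinForm

section Aux

variable (F : Type) [Field F] [Fintype F] [Algebra (ZMod 3) F]

private lemma trace_algebraMap_mul (c : ZMod 3) (x : F) :
    Algebra.trace (ZMod 3) F (algebraMap (ZMod 3) F c * x)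
      = c * Algebra.trace (ZMod 3) F x := by
  rw [← Algebra.smul_def, map_smul, smul_eq_mul]

private lemma trace_two_mul (x : F) :
    Algebra.trace (ZMod 3) F ((2 : F) * x) = 2 * Algebra.trace (ZMod 3) F x := by
  have h2 : ((2 : F)) = algebraMap (ZMod 3) F 2 := by
    rw [map_ofNat]
  rw [h2, trace_algebraMap_mul]

variable {F}

private lemma mem_orth_singleton {x y : F} :
    y ∈ (Algebra.traceForm (ZMod 3) F).orthogonal (Submodule.span (ZMod 3) {x}) ↔
      Algebra.trace (ZMod 3) F (x * y) = 0 := by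
  constructor
  · intro hy
    have := hy x (Submodule.mem_span_singleton_self x)
    simpa [Algebra.traceForm_apply] using this
  · intro hy n hn
    rw [Submodule.mem_span_singleton] at hn
    obtain ⟨c, rfl⟩ := hn
    rw [Algebra.traceForm_apply]
    simp [smul_mul_assoc, hy]

private lemma mem_orth_pair {x₁ x₂ y : F} :
    y ∈ (Algebra.traceForm (ZMod 3) F).orthogonal (Submodule.span (ZMod 3) {x₁, x₂}) ↔
      Algebra.trace (ZMod 3) F (x₁ * y) = 0 ∧ Algebra.trace (ZMod 3) F (x₂ * y) = 0 := by
  constructor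
  · intro hy
    refine ⟨?_, ?_⟩
    · have := hy x₁ (Submodule.subset_span (by simp))
      simpa [Algebra.traceForm_apply] using this
    · have := hy x₂ (Submodule.subset_span (by simp))
      simpa [Algebra.traceForm_apply] using this
  · rintro ⟨h1, h2⟩ n hn
    rw [Submodule.mem_span_pair] at hn
    obtain ⟨c, d, rfl⟩ := hn
    rw [Algebra.traceForm_apply]
    simp [add_mul, smul_mul_assoc, h1, h2]

/-- polarization: if all elements of a subMODULE are isotropic for `Tr (a·x²)`,
then the corresponding bilinear values vanish. -/
private lemma polarize {a : F} {V : Submodule (ZMod 3) F}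
    (h : ∀ u ∈ V, Algebra.trace (ZMod 3) F (a * u ^ 2) = 0)
    {u v : F} (hu : u ∈ V) (hv : v ∈ V) :
    Algebra.trace (ZMod 3) F (a * (u * v)) = 0 := by
  have huv := h (u + v) (V.add_mem hu hv)
  have hsplit : a * (u + v) ^ 2 = a * u ^ 2 + a * v ^ 2 + (2 : F) * (a * (u * v)) := by ring
  rw [hsplit, map_add, map_add, h u hu, h v hv, trace_two_mul] at huv
  have h0 : (2 : ZMod 3) * Algebra.trace (ZMod 3) F (a * (u * v)) = 0 := by
    linear_combination huv
  rcases mul_eq_zero.mp h0 with h | h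
  · exact absurd h (by decide)
  · exact h

end Aux

/-- Key lemma: there is `y` orthogonal to `z` (w.r.t. the `a`-twisted trace form)
with `Tr (a y²)` any prescribed value. -/
private lemma key (m : ℕ) (hm : 4 ≤ m)
    (F : Type) [Field F] [Fintype F] [Algebra (ZMod 3) F]
    (hF : Fintype.card F = 3 ^ m)
    (a : F) (ha : a ≠ 0) (z : F) (k : ZMod 3) :
    ∃ y : F, Algebra.trace (ZMod 3) F (a * z * y) = 0 ∧
      Algebra.trace (ZMod 3) F (a * y ^ 2) = k := by
  set T := Algebra.trace (ZMod 3) F with hT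
  set B := Algebra.traceForm (ZMod 3) F with hB
  have hBnd : B.Nondegenerate := traceForm_nondegenerate _ _
  have hRefl : B.IsRefl := (Algebra.traceForm_isSymm (ZMod 3) (S := F)).isRefl
  have hfin : finrank (ZMod 3) F = m := by
    have := card_eq_pow_finrank (K := ZMod 3) (V := F)
    rw [ZMod.card, hF] at this
    exact (Nat.pow_right_injective (by norm_num) this.symm)
  have hsp1 : ∀ x : F, finrank (ZMod 3) (Submodule.span (ZMod 3) {x} : Submodule (ZMod 3) F) ≤ 1 := by
    intro x
    by_cases hx : x = 0
    · subst hx; rw [Submodule.span_zero_singleton]; simp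
    · rw [finrank_span_singleton hx]
  -- the crucial cancellation: a * w ∈ span S → w/a decomposition
  -- step 1 : find u ⊥ z with Tr(a u²) ≠ 0
  obtain ⟨u, hu1, hu2⟩ : ∃ u : F, T (a * z * u) = 0 ∧ T (a * u ^ 2) ≠ 0 := by
    by_contra hcon
    push_neg at hcon
    set V := B.orthogonal (Submodule.span (ZMod 3) {a * z}) with hV
    have hVmem : ∀ y : F, y ∈ V ↔ T (a * z * y) = 0 := fun y => mem_orth_singleton
    have hiso : ∀ u ∈ V, T (a * u ^ 2) = 0 := fun u hu => hcon u ((hVmem u).mp hu)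
    have hle : V ≤ Submodule.span (ZMod 3) {z} := by
      intro w hw
      have hw' : a * w ∈ B.orthogonal V := by
        intro n hn
        have := polarize hiso hw hn
        simp only [LinearMap.IsOrtho, hB, Algebra.traceForm_apply]
        calc T (n * (a * w)) = T (a * (w * n)) := by ring_nf
        _ = 0 := polarize hiso hw hn
      rw [hV, orthogonal_orthogonal hBnd hRefl] at hw'
      rw [Submodule.mem_span_singleton] at hw' ⊢
      obtain ⟨c, hc⟩ := hw'
      refine ⟨c, ?_⟩
      have heq : a * (c • z - w) = 0 := by
        rw [mul_sub, mul_smul_comm, hc, sub_self]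
      rcases mul_eq_zero.mp heq with h | h
      · exact absurd h ha
      · exact sub_eq_zero.mp h
    have h1 : finrank (ZMod 3) V ≤ 1 :=
      le_trans (Submodule.finrank_mono hle) (hsp1 z)
    have h2 : finrank (ZMod 3) V = m - finrank (ZMod 3) (Submodule.span (ZMod 3) {a*z} : Submodule (ZMod 3) F) := by
      rw [hV, finrank_orthogonal hBnd, hfin]
    have h3 := hsp1 (a * z)
    omega
  -- step 2 : find v ⊥ z, ⊥ u with Tr(a v²) ≠ 0
  obtain ⟨v, hv1, hv2, hv3⟩ : ∃ v : F, T (a * z * v) = 0 ∧ T (a * u * v) = 0 ∧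
      T (a * v ^ 2) ≠ 0 := by
    by_contra hcon
    push_neg at hcon
    set W := B.orthogonal (Submodule.span (ZMod 3) {a * z, a * u}) with hW
    have hWmem : ∀ y : F, y ∈ W ↔ T (a * z * y) = 0 ∧ T (a * u * y) = 0 := fun y =>
      mem_orth_pair
    have hiso : ∀ w ∈ W, T (a * w ^ 2) = 0 := fun w hw =>
      hcon w ((hWmem w).mp hw).1 ((hWmem w).mp hw).2
    have hle : W ≤ Submodule.span (ZMod 3) {z} := by
      intro w hw
      have hw' : a * w ∈ B.orthogonal W := by
        intro n hn
        simp only [LinearMap.IsOrtho, hB, Algebra.traceForm_apply]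
        calc T (n * (a * w)) = T (a * (w * n)) := by ring_nf
        _ = 0 := polarize hiso hw hn
      rw [hW, orthogonal_orthogonal hBnd hRefl] at hw'
      rw [Submodule.mem_span_pair] at hw'
      obtain ⟨α, β, hab⟩ := hw'
      have hwz : w = α • z + β • u := by
        have : a * (α • z + β • u - w) = 0 := by
          rw [mul_sub, mul_add, mul_smul_comm, mul_smul_comm, ← hab]
          abel
        rcases mul_eq_zero.mp this with h | h
        · exact absurd h ha
        · exact (sub_eq_zero.mp h).symm
      -- use the second orthogonality to kill β
      have horth := ((hWmem w).mp hw).2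
      rw [hwz] at horth
      have hcalc : a * u * (α • z + β • u) = α • (a * z * u) + β • (a * u ^ 2) := by
        rw [mul_add, mul_smul_comm, mul_smul_comm]
        ring_nf
      rw [hcalc, map_add, map_smul, map_smul, hu1, smul_zero, zero_add, smul_eq_mul] at horth
      have hβ : β = 0 := by
        rcases mul_eq_zero.mp horth with h | h
        · exact h
        · exact absurd h hu2
      rw [hwz, hβ, zero_smul, add_zero]
      exact Submodule.smul_mem _ _ (Submodule.mem_span_singleton_self z)
    have h1 : finrank (ZMod 3) W ≤ 1 :=
      le_trans (Submodule.finrank_mono hle) (hsp1 z)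
    have h2 : finrank (ZMod 3) W =
        m - finrank (ZMod 3) (Submodule.span (ZMod 3) {a*z, a*u} : Submodule (ZMod 3) F) := by
      rw [hW, finrank_orthogonal hBnd, hfin]
    have h3 : finrank (ZMod 3) (Submodule.span (ZMod 3) {a*z, a*u} : Submodule (ZMod 3) F) ≤ 2 := by
      have hsp : (Submodule.span (ZMod 3) {a*z, a*u} : Submodule (ZMod 3) F)
          = Submodule.span (ZMod 3) {a*z} ⊔ Submodule.span (ZMod 3) {a*u} := by
        rw [Submodule.span_insert]
      rw [hsp]
      have := Submodule.finrank_sup_add_finrank_inf_eq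
        (Submodule.span (ZMod 3) {a*z}) (Submodule.span (ZMod 3) {a*u})
      have ha1 := hsp1 (a*z); have ha2 := hsp1 (a*u)
      omega
    omega
  -- step 3: combine
  have hsurj : ∀ (p q k : ZMod 3), p ≠ 0 → q ≠ 0 → ∃ s t : ZMod 3, s^2 * p + t^2 * q = k := by
    decide
  obtain ⟨s, t, hst⟩ := hsurj (T (a * u ^ 2)) (T (a * v ^ 2)) k hu2 hv3
  set s' := algebraMap (ZMod 3) F s with hs'
  set t' := algebraMap (ZMod 3) F t with ht'
  refine ⟨s' * u + t' * v, ?_, ?_⟩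
  · have hexp : a * z * (s' * u + t' * v) = s' * (a * z * u) + t' * (a * z * v) := by ring
    rw [hexp, map_add, hs', ht', trace_algebraMap_mul, trace_algebraMap_mul, hu1, hv1]
    simp
  · have hexp : a * (s' * u + t' * v) ^ 2
        = s' ^ 2 * (a * u ^ 2) + t' ^ 2 * (a * v ^ 2) + (2 : F) * (s' * (t' * (a * (u * v)))) := by
      ring
    have hs2 : s' ^ 2 = algebraMap (ZMod 3) F (s ^ 2) := by rw [map_pow]
    have ht2 : t' ^ 2 = algebraMap (ZMod 3) F (t ^ 2) := by rw [map_pow]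
    have huv0 : T (a * (u * v)) = 0 := by
      have : a * (u * v) = a * u * v := by ring
      rw [this]; exact hv2
    rw [hexp, map_add, map_add, hs2, ht2, trace_algebraMap_mul, trace_algebraMap_mul,
      trace_two_mul, hs', ht', trace_algebraMap_mul, trace_algebraMap_mul, huv0]
    simp only [mul_zero]
    rw [add_zero]
    exact hst

/-- the set of differences of elements of
`H(a,h) = {x : Tr(a x^2) + h = 0}` is all of `GF(q)`, `q = 3^m`, `m ≥ 4`. -/
theorem delta_H_eq_univ (m : ℕ) (hm : 4 ≤ m)
    (F : Type) [Field F] [Fintype F] [Algebra (ZMod 3) F]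
    (hF : Fintype.card F = 3 ^ m)
    (a : F) (ha : a ≠ 0) (h : ZMod 3) :
    {c : F | ∃ s s' : F,
        Algebra.trace (ZMod 3) F (a * s ^ 2) + h = 0 ∧
        Algebra.trace (ZMod 3) F (a * s' ^ 2) + h = 0 ∧
        c = s - s'} = Set.univ := by
  have hchar : CharP F 3 := charP_of_injective_algebraMap (algebraMap (ZMod 3) F).injective 3
  have h3 : (3 : F) = 0 := CharP.cast_eq_zero F 3
  apply Set.eq_univ_iff_forall.mpr
  intro c
  set T := Algebra.trace (ZMod 3) F with hT
  set z := c + c with hz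
  obtain ⟨y, hy1, hy2⟩ := key m hm F hF a ha z (-h - T (a * z ^ 2))
  refine ⟨y + z, y - z, ?_, ?_, ?_⟩
  · have hexp : a * (y + z) ^ 2 = a * y ^ 2 + a * (z * y) + a * (z * y) + a * z ^ 2 := by ring
    have hzy : T (a * (z * y)) = 0 := by
      have : a * (z * y) = a * z * y := by ring
      rw [this]; exact hy1
    rw [hexp, map_add, map_add, map_add, hzy, hy2]
    ring
  · have hexp : a * (y - z) ^ 2 = a * y ^ 2 - a * (z * y) - a * (z * y) + a * z ^ 2 := by ring
    have hzy : T (a * (z * y)) = 0 := by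
      have : a * (z * y) = a * z * y := by ring
      rw [this]; exact hy1
    rw [hexp, map_add, map_sub, map_sub, hzy, hy2]
    ring
  · have : (y + z) - (y - z) = z + z := by ring
    rw [this, hz]
    have h3c : c + c + c = 0 := by
      have : c + c + c = (3 : F) * c := by ring
      rw [this, h3, zero_mul]
    linear_combination -h3c
end

section
/- Let q = 3^m with m ≥ 4, Tr : GF(q) → GF(3) the trace, a ∈ GF(q)*, b ∈ GF(q)*, h ∈ GF(3). Let N(a,b,h) be the number of x ∈ GF(q) satisfying both Tr(a x^2) + h = 0 and Tr(a(x+b)^2) + h = 0. Then N(a,b,h) ≥ 3^{m-2} - 2·3^{(m-2)/2}. -/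
open Finset
open AddChar

namespace NLB

noncomputable def e : AddChar (ZMod 3) ℂ := ZMod.stdAddChar

lemma e_prim : (e).IsPrimitive := ZMod.isPrimitive_stdAddChar 3

lemma abs_e (z : ZMod 3) : ‖e z‖ = 1 := by
  rw [show e z = (ZMod.stdAddChar z : ℂ) from rfl, ZMod.stdAddChar_apply]; exact Circle.norm_coe _

variable {F : Type} [Field F] [Fintype F] [Algebra (ZMod 3) F]

noncomputable def ψ (F : Type) [Field F] [Fintype F] [Algebra (ZMod 3) F] : AddChar F ℂ :=
  e.compAddMonoidHom (Algebra.trace (ZMod 3) F).toAddMonoidHom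

lemma psi_apply (x : F) : ψ F x = e (Algebra.trace (ZMod 3) F x) := rfl

lemma abs_psi (x : F) : ‖ψ F x‖ = 1 := abs_e _

lemma fact3 : Fact (Nat.Prime 3) := ⟨by norm_num⟩

lemma charF : CharP F 3 := by
  haveI := fact3
  exact charP_of_injective_algebraMap (algebraMap (ZMod 3) F).injective 3

lemma ringCharF : ringChar F = 3 := by
  haveI := charF (F := F); exact ringChar.eq F 3

lemma tr_nondeg {a : F} (ha : a ≠ 0) : ∃ c : F, Algebra.trace (ZMod 3) F (a * c) ≠ 0 := by
  haveI := fact3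
  have htr := (traceForm_nondegenerate (ZMod 3) F).1 a
  simp_rw [Algebra.traceForm_apply] at htr
  by_contra! hf
  exact ha (htr hf)

lemma psi_prim : (ψ F).IsPrimitive := by
  apply IsPrimitive.of_ne_one
  obtain ⟨c, hc⟩ := tr_nondeg (one_ne_zero : (1:F) ≠ 0)
  rw [one_mul] at hc
  intro hcon
  apply hc
  have h1 : ψ F c = 1 := by rw [hcon]; rfl
  rw [psi_apply] at h1
  have := ZMod.injective_stdAddChar (N := 3)
  have h0 : e (Algebra.trace (ZMod 3) F c) = e 0 := by rw [h1, map_zero_eq_one]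
  exact this h0

lemma sum_psi_mul {r : F} (hr : r ≠ 0) : ∑ x : F, ψ F (r * x) = 0 := by
  have h := sum_eq_zero_of_ne_one (psi_prim hr)
  simpa [mulShift_apply] using h

noncomputable def χ (F : Type) [Field F] [Fintype F] [Algebra (ZMod 3) F]
    [DecidableEq F] : MulChar F ℂ :=
  (quadraticChar F).ringHomComp (Int.castRingHom ℂ)

variable [DecidableEq F]

lemma chi_ne_one : χ F ≠ 1 := by
  rw [χ, MulChar.ringHomComp_ne_one_iff Int.cast_injective]
  exact quadraticChar_ne_one (by rw [ringCharF]; norm_num)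

lemma abs_chi {x : F} (hx : x ≠ 0) : ‖χ F x‖ = 1 := by
  rcases quadraticChar_dichotomy hx with h | h <;>
    simp only [χ, MulChar.ringHomComp_apply, h] <;> norm_num

lemma abs_gauss : ‖gaussSum (χ F) (ψ F)‖ = Real.sqrt (Fintype.card F) := by
  have hsq := gaussSum_sq chi_ne_one ((quadraticChar_isQuadratic F).comp _) (psi_prim (F := F))
  have h1 : ‖gaussSum (χ F) (ψ F)‖ ^ 2 = (Fintype.card F : ℝ) := by
    rw [← norm_pow, hsq, norm_mul]
    rw [abs_chi (neg_ne_zero.mpr one_ne_zero)]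
    simp
  rw [← h1, Real.sqrt_sq (norm_nonneg _)]

lemma sum_sq_eq (α : F) :
    ∑ y : F, ψ F (α * y ^ 2) = ∑ u : F, ((quadraticChar F u : ℂ) + 1) * ψ F (α * u) := by
  rw [← Finset.sum_fiberwise_of_maps_to (g := fun y : F => y ^ 2)
      (fun x _ => Finset.mem_univ _)]
  refine Finset.sum_congr rfl fun u _ => ?_
  have h1 : ∑ y ∈ Finset.univ.filter (fun y : F => y ^ 2 = u), ψ F (α * y ^ 2)
      = ∑ y ∈ Finset.univ.filter (fun y : F => y ^ 2 = u), ψ F (α * u) := by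
    refine Finset.sum_congr rfl fun y hy => ?_
    rw [(Finset.mem_filter.mp hy).2]
  rw [h1, Finset.sum_const, nsmul_eq_mul]
  congr 1
  have h2 := quadraticChar_card_sqrts (by rw [ringCharF]; norm_num) u
  have h3 : {x : F | x ^ 2 = u}.toFinset = Finset.univ.filter (fun y : F => y ^ 2 = u) := by
    ext y; simp
  rw [h3] at h2
  have h4 := congrArg (fun z : ℤ => (z : ℂ)) h2
  push_cast at h4
  exact h4

lemma abs_sum_sq {α : F} (hα : α ≠ 0) :
    ‖∑ y : F, ψ F (α * y ^ 2)‖ = Real.sqrt (Fintype.card F) := by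
  rw [sum_sq_eq]
  have hsplit : ∑ u : F, ((quadraticChar F u : ℂ) + 1) * ψ F (α * u)
      = (∑ u : F, (quadraticChar F u : ℂ) * ψ F (α * u)) + ∑ u : F, ψ F (α * u) := by
    rw [← Finset.sum_add_distrib]; refine Finset.sum_congr rfl fun u _ => ?_; ring
  rw [hsplit, sum_psi_mul hα, add_zero]
  have hgs : ∑ u : F, (quadraticChar F u : ℂ) * ψ F (α * u)
      = gaussSum (χ F) (mulShift (ψ F) α) := by
    refine Finset.sum_congr rfl fun u _ => ?_
    rw [mulShift_apply]; rfl
  rw [hgs]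
  have hu : (Units.mk0 α hα : F) = α := rfl
  have := gaussSum_mulShift (χ F) (ψ F) (Units.mk0 α hα)
  rw [hu] at this
  have habs := congrArg norm this
  rw [norm_mul, abs_chi hα, one_mul] at habs
  rw [habs, abs_gauss]

lemma weil {α : F} (β : F) (hα : α ≠ 0) :
    ‖∑ x : F, ψ F (α * x ^ 2 + β * x)‖ = Real.sqrt (Fintype.card F) := by
  have h2 : (2 : F) * α ≠ 0 := by
    haveI := charF (F := F)
    refine mul_ne_zero ?_ hα
    intro h2
    have h2' : ((2 : ℕ) : F) = 0 := by push_cast; exact h2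
    rw [CharP.cast_eq_zero_iff F 3 2] at h2'
    norm_num at h2'
  set γ := β / (2 * α) with hγ
  have key : ∀ y : F, α * (y - γ) ^ 2 + β * (y - γ) = (α * γ ^ 2 - β * γ) + α * y ^ 2 := by
    intro y
    have hβ : β = 2 * α * γ := by rw [hγ]; field_simp [left_ne_zero_of_mul h2]
    rw [hβ]; ring
  have hs : ∑ x : F, ψ F (α * x ^ 2 + β * x)
      = ∑ y : F, ψ F (α * (y - γ) ^ 2 + β * (y - γ)) :=
    (Fintype.sum_equiv (Equiv.subRight γ) _ _ (fun y => rfl)).symm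
  rw [hs]
  have : ∑ y : F, ψ F (α * (y - γ) ^ 2 + β * (y - γ))
      = ψ F (α * γ ^ 2 - β * γ) * ∑ y : F, ψ F (α * y ^ 2) := by
    rw [Finset.mul_sum]
    refine Finset.sum_congr rfl fun y _ => ?_
    rw [key y, map_add_eq_mul]
  rw [this, norm_mul, abs_psi, one_mul, abs_sum_sq hα]


lemma two_ne_zero_F : (2 : F) ≠ 0 := by
  haveI := charF (F := F)
  intro h2
  have h2' : ((2:ℕ) : F) = 0 := by push_cast; exact h2
  rw [CharP.cast_eq_zero_iff F 3 2] at h2'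
  norm_num at h2'

lemma tr_smul (s : ZMod 3) (y : F) :
    Algebra.trace (ZMod 3) F (algebraMap (ZMod 3) F s * y) = s * Algebra.trace (ZMod 3) F y := by
  rw [← Algebra.smul_def, map_smul, smul_eq_mul]

lemma ind (u : ZMod 3) [Decidable (u = 0)] : (if u = 0 then (1:ℂ) else 0) = (1/3) * ∑ s : ZMod 3, e (s * u) := by
  by_cases hu : u = 0
  · subst hu
    simp only [if_pos rfl, mul_zero, map_zero_eq_one, Finset.sum_const, Finset.card_univ]
    rw [ZMod.card]
    norm_num
  · rw [if_neg hu]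
    have hsum : ∑ s : ZMod 3, e (s * u) = ∑ s : ZMod 3, mulShift e u s :=
      Finset.sum_congr rfl fun s _ => by rw [mulShift_apply, mul_comm]
    rw [hsum, sum_eq_zero_of_ne_one (e_prim hu), mul_zero]

end NLB

open NLB

/-- the number `N(a,b,h)` of `x` with `Tr(a x^2) + h = 0` and
`Tr(a (x+b)^2) + h = 0` is at least `3^(m-2) - 2 · 3^((m-2)/2)`. -/
theorem N_lower_bound (m : ℕ) (hm : 4 ≤ m)
    (F : Type) [Field F] [Fintype F] [Algebra (ZMod 3) F] [DecidableEq (ZMod 3)]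
    (hF : Fintype.card F = 3 ^ m)
    (a b : F) (ha : a ≠ 0) (hb : b ≠ 0) (h : ZMod 3) :
    ((Finset.univ.filter fun x : F =>
        Algebra.trace (ZMod 3) F (a * x ^ 2) + h = 0 ∧
        Algebra.trace (ZMod 3) F (a * (x + b) ^ 2) + h = 0).card : ℝ) ≥
      (3 : ℝ) ^ (m - 2) - 2 * Real.sqrt ((3 : ℝ) ^ (m - 2)) := by
  classical
  haveI := fact3
  set Tr := Algebra.trace (ZMod 3) F with hTr
  set c : ZMod 3 := Tr (a * b ^ 2) with hc
  -- rewrite the filter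
  have hfilter : (Finset.univ.filter fun x : F =>
        Tr (a * x ^ 2) + h = 0 ∧ Tr (a * (x + b) ^ 2) + h = 0)
      = Finset.univ.filter fun x : F =>
        Tr (a * x ^ 2) + h = 0 ∧ Tr (2 * a * b * x) + c = 0 := by
    refine Finset.filter_congr fun x _ => ?_
    have hexp : Tr (a * (x + b) ^ 2) = Tr (a * x ^ 2) + (Tr (2 * a * b * x) + c) := by
      rw [hc, ← map_add, ← map_add]
      congr 1
      ring
    constructor
    · rintro ⟨h1, h2⟩
      refine ⟨h1, ?_⟩
      rw [hexp] at h2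
      linear_combination h2 - h1
    · rintro ⟨h1, h2⟩
      refine ⟨h1, ?_⟩
      rw [hexp]
      linear_combination h1 + h2
  rw [hfilter]
  set N : ℕ := (Finset.univ.filter fun x : F =>
      Tr (a * x ^ 2) + h = 0 ∧ Tr (2 * a * b * x) + c = 0).card with hN
  -- the complex-valued count
  have hstep1 : (N : ℂ) = ∑ x : F,
      (if Tr (a * x ^ 2) + h = 0 then (1:ℂ) else 0) *
      (if Tr (2 * a * b * x) + c = 0 then (1:ℂ) else 0) := by
    rw [hN, Finset.card_filter]
    push_cast [apply_ite (Nat.cast : ℕ → ℂ)]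
    refine Finset.sum_congr rfl fun x _ => ?_
    split_ifs <;> simp_all
  set sF : ZMod 3 → F := fun s => algebraMap (ZMod 3) F s with hsF
  set A : ZMod 3 → F := fun s => sF s * a with hA
  set B : ZMod 3 → F := fun t => sF t * (2 * a * b) with hB
  set T : ZMod 3 → ZMod 3 → ℂ := fun s t =>
    e (s * h + t * c) * ∑ x : F, ψ F (A s * x ^ 2 + B t * x) with hT
  have hinner : ∀ s t : ZMod 3,
      ∑ x : F, e (s * (Tr (a * x ^ 2) + h)) * e (t * (Tr (2 * a * b * x) + c)) = T s t := by
    intro s t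
    have hpt : ∀ x : F, e (s * (Tr (a * x ^ 2) + h)) * e (t * (Tr (2 * a * b * x) + c))
        = e (s * h + t * c) * ψ F (A s * x ^ 2 + B t * x) := by
      intro x
      have harg : A s * x ^ 2 + B t * x = sF s * (a * x ^ 2) + sF t * (2 * a * b * x) := by
        rw [hA, hB]; ring
      rw [harg, map_add_eq_mul (ψ F), psi_apply, psi_apply, ← hTr, tr_smul, tr_smul, ← hTr]
      rw [mul_add, mul_add, map_add_eq_mul, map_add_eq_mul, map_add_eq_mul]
      ring
    rw [hT]
    simp only [hpt]
    rw [← Finset.mul_sum]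
  have hstep2 : (N : ℂ) * 9 = ∑ s : ZMod 3, ∑ t : ZMod 3, T s t := by
    rw [hstep1, Finset.sum_mul]
    have hx : ∀ x : F,
        ((if Tr (a * x ^ 2) + h = 0 then (1:ℂ) else 0) *
         (if Tr (2 * a * b * x) + c = 0 then (1:ℂ) else 0)) * 9
        = ∑ s : ZMod 3, ∑ t : ZMod 3,
            e (s * (Tr (a * x ^ 2) + h)) * e (t * (Tr (2 * a * b * x) + c)) := by
      intro x
      rw [ind (Tr (a * x ^ 2) + h), ind (Tr (2 * a * b * x) + c),
        show ∀ S1 S2 : ℂ, (1/3*S1)*(1/3*S2)*9 = S1*S2 from fun _ _ => by ring,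
        Finset.sum_mul_sum]
    simp only [hx]
    rw [Finset.sum_comm]
    refine Finset.sum_congr rfl fun s _ => ?_
    rw [Finset.sum_comm]
    refine Finset.sum_congr rfl fun t _ => ?_
    exact hinner s t
  -- evaluations of T
  have hA0 : A 0 = 0 := by simp [hA, hsF]
  have hB0 : B 0 = 0 := by simp [hB, hsF]
  have hT00 : T 0 0 = (Fintype.card F : ℂ) := by
    simp only [hT]
    have harg : ∀ x : F, A 0 * x ^ 2 + B 0 * x = 0 := fun x => by rw [hA0, hB0]; ring
    simp [harg, AddChar.map_zero_eq_one]
  have hT0t : ∀ t : ZMod 3, t ≠ 0 → T 0 t = 0 := by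
    intro t ht
    have hBt : B t ≠ 0 := mul_ne_zero ((map_ne_zero (algebraMap (ZMod 3) F)).mpr ht)
      (mul_ne_zero (mul_ne_zero two_ne_zero_F ha) hb)
    simp only [hT]
    have harg : ∀ x : F, A 0 * x ^ 2 + B t * x = B t * x := fun x => by rw [hA0]; ring
    simp only [harg]
    rw [sum_psi_mul hBt, mul_zero]
  have hTbound : ∀ s t : ZMod 3, s ≠ 0 → ‖T s t‖ ≤ Real.sqrt (Fintype.card F) := by
    intro s t hs
    have hAs : A s ≠ 0 := mul_ne_zero ((map_ne_zero (algebraMap (ZMod 3) F)).mpr hs) ha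
    simp only [hT]
    rw [norm_mul, abs_e, one_mul, weil (B t) hAs]
  -- expand the double sum
  have hzsum : ∀ f : ZMod 3 → ℂ, ∑ s, f s = f 0 + f 1 + f 2 := fun f => Fin.sum_univ_three f
  have h1ne : (1 : ZMod 3) ≠ 0 := one_ne_zero
  have h2ne : (2 : ZMod 3) ≠ 0 := by
    intro h2
    rw [show (2:ZMod 3) = ((2:ℕ):ZMod 3) by norm_num,
      ZMod.natCast_eq_zero_iff] at h2
    norm_num at h2
  have hexp : (N:ℂ)*9 = (Fintype.card F : ℂ)
      + (T 1 0 + T 1 1 + T 1 2 + (T 2 0 + T 2 1 + T 2 2)) := by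
    rw [hstep2, hzsum, hzsum, hzsum, hzsum, hT00, hT0t 1 h1ne, hT0t 2 h2ne]
    ring
  have habs : ‖(N:ℂ)*9 - (Fintype.card F:ℂ)‖ ≤ 6 * Real.sqrt (Fintype.card F) := by
    rw [hexp, add_sub_cancel_left]
    have t1 := norm_add_le (T 1 0 + T 1 1 + T 1 2) (T 2 0 + T 2 1 + T 2 2)
    have t2 := norm_add_le (T 1 0 + T 1 1) (T 1 2)
    have t3 := norm_add_le (T 1 0) (T 1 1)
    have t4 := norm_add_le (T 2 0 + T 2 1) (T 2 2)
    have t5 := norm_add_le (T 2 0) (T 2 1)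
    linarith [hTbound 1 0 h1ne, hTbound 1 1 h1ne, hTbound 1 2 h1ne,
      hTbound 2 0 h2ne, hTbound 2 1 h2ne, hTbound 2 2 h2ne]
  have hreal : ‖(N:ℂ)*9 - (Fintype.card F:ℂ)‖
      = |(N:ℝ)*9 - (Fintype.card F:ℝ)| := by
    rw [show ((N:ℂ)*9 - (Fintype.card F:ℂ)) = (((N:ℝ)*9 - (Fintype.card F:ℝ) : ℝ) : ℂ) by
      push_cast; ring, Complex.norm_real, Real.norm_eq_abs]
  rw [hreal] at habs
  have hlow : (N:ℝ)*9 ≥ (Fintype.card F:ℝ) - 6*Real.sqrt (Fintype.card F) := by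
    have hle := abs_le.mp habs
    linarith [hle.1]
  have hq : (Fintype.card F : ℝ) = 9 * (3:ℝ)^(m-2) := by
    rw [hF]
    push_cast
    have h9 : (3:ℝ)^((m-2)+2) = (3:ℝ)^m := by congr 1; omega
    rw [← h9, pow_add]
    ring
  have hsq : Real.sqrt (Fintype.card F) = 3 * Real.sqrt ((3:ℝ)^(m-2)) := by
    rw [hq, show (9:ℝ) = 3^2 by norm_num, Real.sqrt_mul (by positivity), Real.sqrt_sq (by norm_num)]
  rw [ge_iff_le]
  rw [hsq, hq] at hlow
  linarith
end

section
/- Let q = 3^m with m ≥ 3 odd. Let N(q) be the set of nonsquares in GF(q). Then Δ(N(q)) = {s - s' : s, s' ∈ N(q)} = GF(q). -/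
open Polynomial

/-- In a suitable field, there is a nonzero `t` whose square avoids two given values. -/
lemma exists_good_t (F : Type) [Field F] [Fintype F] (hcard : 5 < Fintype.card F) (c : F) :
    ∃ t : F, t ≠ 0 ∧ t ^ 2 ≠ c ∧ t ^ 2 ≠ -c := by
  by_contra h
  push_neg at h
  set p : F[X] := X * (X ^ 2 - C c) * (X ^ 2 + C c) with hp
  have hdeg : p.natDegree = 5 := by
    rw [hp]; compute_degree!
  have hp0 : p ≠ 0 := fun h0 => by simp [h0] at hdeg
  have hsub : (Finset.univ : Finset F).val ⊆ p.roots := by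
    intro t _
    rw [Polynomial.mem_roots hp0]
    simp only [hp, IsRoot, eval_mul, eval_X, eval_pow, eval_sub, eval_add, eval_C]
    rcases eq_or_ne t 0 with h0 | h0
    · rw [h0]; ring
    · rcases eq_or_ne (t ^ 2) c with h1 | h1
      · rw [h1]; ring
      · rw [h t h0 h1]; ring
  have hle := Polynomial.card_le_degree_of_subset_roots hsub
  rw [Finset.card_univ, hdeg] at hle
  omega

/-- every element of `GF(3^m)`, `m ≥ 3` odd, is a difference of two
nonsquares. -/
theorem delta_nonsquares_eq_univ (m : ℕ) (hm : 3 ≤ m) (hmodd : Odd m)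
    (F : Type) [Field F] [Fintype F] [Algebra (ZMod 3) F]
    (hF : Fintype.card F = 3 ^ m) :
    {c : F | ∃ s s' : F,
        s ∈ {y : F | y ≠ 0 ∧ ¬∃ x : F, y = x ^ 2} ∧
        s' ∈ {y : F | y ≠ 0 ∧ ¬∃ x : F, y = x ^ 2} ∧
        c = s - s'} = Set.univ := by
  -- characteristic facts
  have h3 : (3 : F) = 0 := by
    rw [show (3 : F) = algebraMap (ZMod 3) F 3 from (map_ofNat _ 3).symm,
      show (3 : ZMod 3) = 0 from rfl, map_zero]
  have h2 : (2 : F) ≠ 0 := by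
    intro h
    have : (1 : F) = 0 := by linear_combination h3 - h
    exact one_ne_zero this
  -- card mod 4
  have hmod : Fintype.card F % 4 = 3 := by
    rw [hF]
    obtain ⟨k, hk⟩ := hmodd
    subst hk
    have : 3 ^ (2 * k + 1) = 9 ^ k * 3 := by rw [pow_succ, pow_mul]; norm_num
    rw [this, Nat.mul_mod, Nat.pow_mod]
    norm_num
  -- -1 is not a square
  have hns : ¬ IsSquare (-1 : F) := by
    rw [FiniteField.isSquare_neg_one_iff, hmod]; simp
  -- negatives of nonzero squares are nonsquares
  have key : ∀ a : F, a ≠ 0 → (-a ^ 2 ≠ 0 ∧ ¬∃ x : F, -a ^ 2 = x ^ 2) := by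
    intro a ha
    constructor
    · simpa using pow_ne_zero 2 ha
    · rintro ⟨x, hx⟩
      apply hns
      refine ⟨x / a, ?_⟩
      rw [← sq, div_pow, ← hx]
      field_simp
  have hcard5 : 5 < Fintype.card F := by
    rw [hF]
    calc 5 < 3 ^ 3 := by norm_num
    _ ≤ 3 ^ m := Nat.pow_le_pow_right (by norm_num) hm
  ext c
  simp only [Set.mem_setOf_eq, Set.mem_univ, iff_true]
  rcases eq_or_ne c 0 with rfl | hc
  · -- c = 0 : take s = s' = -1
    have h1 := key 1 one_ne_zero
    exact ⟨-1 ^ 2, -1 ^ 2, h1, h1, by ring⟩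
  · obtain ⟨t, ht0, htc, htnc⟩ := exists_good_t F hcard5 c
    set a : F := (c / t - t) / 2 with ha
    set b : F := (c / t + t) / 2 with hb
    have ha0 : a ≠ 0 := by
      intro h
      rw [ha, _root_.div_eq_zero_iff] at h
      rcases h with h | h
      · apply htc
        have hct : c / t = t := by linear_combination h
        field_simp at hct
        rw [hct]
      · exact h2 h
    have hb0 : b ≠ 0 := by
      intro h
      rw [hb, _root_.div_eq_zero_iff] at h
      rcases h with h | h
      · apply htnc
        have hct : c / t = -t := by linear_combination h
        field_simp at hct
        rw [hct]; ring
      · exact h2 h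
    have hdiff : b ^ 2 - a ^ 2 = c := by
      have : b ^ 2 - a ^ 2 = (b - a) * (b + a) := by ring
      rw [this, ha, hb]
      field_simp
      ring
    exact ⟨-a ^ 2, -b ^ 2, key a ha0, key b hb0, by linear_combination -hdiff⟩
end

section
/- Let q = 3^m with m ≥ 3 odd and Tr : GF(q) → GF(3) the trace. For each pair (a,b) ∈ GF(q)* × GF(q), there exists exactly one h ∈ GF(3) such that the vector (Tr(a x^2 + b x) + h)_{x ∈ GF(q)} has Hamming weight equal to d = 2·3^{m-1} - 3^{(m-1)/2}, the minimum nonzero weight of C(m,3). Consequently, the total number of codewords of weight d in C(m,3) is q(q-1). -/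
open Finset

set_option linter.unusedSectionVars false

section Aux
variable {m : ℕ} {F : Type} [Field F] [Fintype F] [DecidableEq F] [Algebra (ZMod 3) F]

local notation "tr" => Algebra.trace (ZMod 3) F

theorem sum_zmod3 (f : ZMod 3 → ℕ) : ∑ s, f s = f 0 + f 1 + f 2 := Fin.sum_univ_three f

theorem char3 : (3 : F) = 0 := by
  have := map_natCast (algebraMap (ZMod 3) F) 3
  rw [show ((3:ℕ) : ZMod 3) = 0 by decide] at this
  simpa using this.symm

theorem two_ne_zero'' : (2 : F) ≠ 0 := by
  intro h
  have h3 : (3:F) = 0 := char3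
  have : (1:F) = 0 := by linear_combination h3 - h
  exact one_ne_zero this

theorem trace_surj : Function.Surjective (tr) := by
  have : FiniteDimensional (ZMod 3) F := Module.Finite.of_finite
  have : Algebra.IsSeparable (ZMod 3) F := inferInstance
  exact Algebra.trace_surjective (ZMod 3) F

theorem exists_tr_eq (u : F) (hu : u ≠ 0) (s : ZMod 3) : ∃ x, tr (u * x) = s := by
  obtain ⟨w, hw⟩ := trace_surj (F := F) s
  exact ⟨u⁻¹ * w, by rw [← mul_assoc, mul_inv_cancel₀ hu, one_mul, hw]⟩

/-- fibers of a trace-linear map all have the same card -/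
theorem linear_fiber_card (hF : Fintype.card F = 3 ^ m) (hm : 1 ≤ m)
    (u : F) (hu : u ≠ 0) (s : ZMod 3) :
    (univ.filter fun x : F => tr (u * x) = s).card = 3 ^ (m - 1) := by
  -- all fibers have equal card
  have key : ∀ s t : ZMod 3, (univ.filter fun x : F => tr (u * x) = s).card
      = (univ.filter fun x : F => tr (u * x) = t).card := by
    intro s t
    obtain ⟨z, hz⟩ := exists_tr_eq u hu (t - s)
    apply Finset.card_bij (fun x _ => x + z)
    · intro x hx
      simp only [mem_filter, mem_univ, true_and] at hx ⊢
      rw [mul_add, map_add, hx, hz]; ring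
    · intro x hx y hy hxy
      exact add_right_cancel hxy
    · intro y hy
      simp only [mem_filter, mem_univ, true_and] at hy
      refine ⟨y - z, ?_, by ring⟩
      simp only [mem_filter, mem_univ, true_and]
      rw [mul_sub, map_sub, hy, hz]; ring
  have part : ∑ s : ZMod 3, (univ.filter fun x : F => tr (u * x) = s).card
      = Fintype.card F := by
    rw [← Finset.card_eq_sum_card_fiberwise (f := fun x : F => tr (u * x))
      (t := (univ : Finset (ZMod 3))) (fun x _ => mem_univ _)]
    rfl
  rw [sum_zmod3 (fun s => (univ.filter fun x : F => tr (u * x) = s).card)] at part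
  rw [← key s 0, ← key s 1, ← key s 2] at part
  have : 3 * (univ.filter fun x : F => tr (u * x) = s).card = 3 ^ m := by
    rw [← hF, ← part]; ring
  have h3 : (3:ℕ) ^ m = 3 * 3 ^ (m-1) := by
    conv_lhs => rw [show m = 1 + (m-1) by omega]
    rw [pow_add, pow_one]
  omega



theorem neg_one_not_square (hF : Fintype.card F = 3 ^ m) (hmodd : Odd m) :
    ¬ IsSquare (-1 : F) := by
  rw [FiniteField.isSquare_neg_one_iff, hF]
  obtain ⟨k, rfl⟩ := hmodd
  have h9 : 9 ^ k % 4 = 1 := by rw [Nat.pow_mod]; norm_num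
  rw [pow_add, pow_mul, pow_one, Nat.mul_mod, show (3:ℕ)^2 = 9 from rfl, h9]
  simp

/-- any nonzero a' is a * c^2 or -a * c^2 -/
theorem square_class (hF : Fintype.card F = 3 ^ m) (hmodd : Odd m)
    (a a' : F) (ha : a ≠ 0) (ha' : a' ≠ 0) :
    (∃ c : F, c ≠ 0 ∧ a' = a * c ^ 2) ∨ (∃ c : F, c ≠ 0 ∧ a' = -a * c ^ 2) := by
  have hchar : ringChar F ≠ 2 := by
    have : CharP F 3 := charP_of_injective_ringHom (algebraMap (ZMod 3) F).injective 3
    rw [ringChar.eq F 3]; norm_num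
  set r := a' / a with hr
  have hrne : r ≠ 0 := div_ne_zero ha' ha
  by_cases h : IsSquare r
  · obtain ⟨t, ht⟩ := h
    refine Or.inl ⟨t, ?_, ?_⟩
    · rintro rfl; rw [mul_zero] at ht; exact hrne ht
    · field_simp [hr, sq] at ht ⊢; rw [← ht, hr, div_mul_cancel₀ _ ha]
  · have h1 : quadraticChar F r = -1 := quadraticChar_neg_one_iff_not_isSquare.mpr h
    have h2 : quadraticChar F (-1 : F) = -1 :=
      quadraticChar_neg_one_iff_not_isSquare.mpr (neg_one_not_square hF hmodd)
    have h3 : quadraticChar F (-r) = 1 := by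
      rw [show -r = -1 * r by ring, map_mul, h1, h2]; norm_num
    have h4 : IsSquare (-r) :=
      (quadraticChar_one_iff_isSquare (neg_ne_zero.mpr hrne)).mp h3
    obtain ⟨t, ht⟩ := h4
    refine Or.inr ⟨t, ?_, ?_⟩
    · rintro rfl; rw [mul_zero] at ht; exact hrne (neg_eq_zero.mp ht)
    · have hrr : a' = a * r := by rw [hr, mul_comm, div_mul_cancel₀ _ ha]
      rw [hrr, show r = -(t*t) by linear_combination -ht]; ring



theorem n_scale (a c : F) (hc : c ≠ 0) (s : ZMod 3) :
    (univ.filter fun x : F => tr (a * c ^ 2 * x ^ 2) = s).card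
      = (univ.filter fun x : F => tr (a * x ^ 2) = s).card := by
  apply Finset.card_bij (fun x _ => c * x)
  · intro x hx
    simp only [mem_filter, mem_univ, true_and] at hx ⊢
    rw [show a * (c*x)^2 = a * c^2 * x^2 by ring]; exact hx
  · intro x _ y _ hxy; exact mul_left_cancel₀ hc hxy
  · intro y hy
    simp only [mem_filter, mem_univ, true_and] at hy
    refine ⟨c⁻¹ * y, ?_, by field_simp⟩
    simp only [mem_filter, mem_univ, true_and]
    rw [show a * c^2 * (c⁻¹*y)^2 = a * (c * c⁻¹)^2 * y^2 by ring, mul_inv_cancel₀ hc]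
    simpa using hy

theorem n0_neg (a : F) :
    (univ.filter fun x : F => tr (-a * x ^ 2) = 0).card
      = (univ.filter fun x : F => tr (a * x ^ 2) = 0).card := by
  congr 1
  apply filter_congr
  intro x _
  rw [show -a * x^2 = -(a*x^2) by ring, map_neg, neg_eq_zero]

theorem double_count (hF : Fintype.card F = 3 ^ m) (hm : 1 ≤ m) :
    ∑ a ∈ univ.filter (fun a : F => a ≠ 0),
      (univ.filter fun x : F => tr (a * x ^ 2) = 0).card
      = (3 ^ m - 1) * 3 ^ (m - 1) := by
  have swap : ∑ a ∈ univ.filter (fun a : F => a ≠ 0),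
      (univ.filter fun x : F => tr (a * x ^ 2) = 0).card
      = ∑ x : F, ((univ.filter (fun a : F => a ≠ 0)).filter
          (fun a => tr (a * x ^ 2) = 0)).card := by
    simp only [Finset.card_filter]
    rw [Finset.sum_comm]
  rw [swap]
  have hq1 : (univ.filter (fun a : F => a ≠ 0)).card = 3 ^ m - 1 := by
    rw [Finset.filter_ne', Finset.card_erase_of_mem (mem_univ _), Finset.card_univ, hF]
  have hg : ∀ x : F, x ≠ 0 → ((univ.filter (fun a : F => a ≠ 0)).filter
      (fun a => tr (a * x ^ 2) = 0)).card = 3 ^ (m-1) - 1 := by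
    intro x hx
    have hset : (univ.filter (fun a : F => a ≠ 0)).filter (fun a => tr (a * x ^ 2) = 0)
        = (univ.filter (fun a : F => tr (x ^ 2 * a) = 0)).erase 0 := by
      ext a
      simp only [mem_filter, mem_univ, true_and, mem_erase, mul_comm]
    rw [hset, Finset.card_erase_of_mem (by simp), linear_fiber_card hF hm _ (pow_ne_zero 2 hx)]
  have h0 : ((univ.filter (fun a : F => a ≠ 0)).filter
      (fun a => tr (a * (0:F) ^ 2) = 0)).card = 3 ^ m - 1 := by
    rw [← hq1]
    congr 1
    apply Finset.filter_true_of_mem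
    intro a _
    simp
  rw [Finset.sum_eq_sum_sdiff_singleton_add (mem_univ (0:F)), h0]
  have hrest : ∑ x ∈ univ \ {(0:F)}, ((univ.filter (fun a : F => a ≠ 0)).filter
      (fun a => tr (a * x ^ 2) = 0)).card = (3^m - 1) * (3^(m-1) - 1) := by
    rw [Finset.sum_congr rfl (fun x hx => hg x (by simpa using (Finset.mem_sdiff.mp hx).2))]
    rw [Finset.sum_const, smul_eq_mul]
    congr 1
    rw [Finset.card_sdiff_of_subset (by simp), Finset.card_univ, hF, Finset.card_singleton]
  rw [hrest]
  have hB : 1 ≤ 3 ^ (m-1) := Nat.one_le_pow _ _ (by norm_num)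
  obtain ⟨b, hb⟩ : ∃ b, 3^(m-1) = b + 1 := ⟨3^(m-1)-1, by omega⟩
  rw [hb]
  simp only [Nat.add_sub_cancel]
  ring




/-- cross count, step 2 -/
theorem uv_count (hF : Fintype.card F = 3 ^ m) (hm : 1 ≤ m) (a : F) (ha : a ≠ 0) :
    (univ.filter fun p : F × F => tr (a * (p.1 * p.2)) = 1).card
      = (3 ^ m - 1) * 3 ^ (m - 1) := by
  rw [Finset.card_filter]
  rw [Fintype.sum_prod_type]
  have inner : ∀ u : F, (∑ v : F, if tr (a * (u * v)) = 1 then 1 else 0)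
      = if u = 0 then 0 else 3 ^ (m - 1) := by
    intro u
    by_cases hu : u = 0
    · simp [hu, show tr (0:F) = 0 from map_zero _]
    · rw [if_neg hu, ← Finset.card_filter]
      have : ∀ v : F, a * (u * v) = (a * u) * v := fun v => by ring
      simp_rw [this]
      exact linear_fiber_card hF hm _ (mul_ne_zero ha hu) 1
  rw [Finset.sum_congr rfl (fun u _ => inner u)]
  rw [Finset.sum_eq_sum_sdiff_singleton_add (mem_univ (0:F)), if_pos rfl, add_zero]
  rw [Finset.sum_congr rfl (fun u hu => if_neg (by simpa using (Finset.mem_sdiff.mp hu).2))]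
  rw [Finset.sum_const, smul_eq_mul]
  congr 1
  rw [Finset.card_sdiff_of_subset (by simp), Finset.card_univ, hF, Finset.card_singleton]

/-- step 1: change of variables -/
theorem xy_to_uv (a : F) :
    (univ.filter fun p : F × F => tr (a * p.1 ^ 2) - tr (a * p.2 ^ 2) = 1).card
      = (univ.filter fun p : F × F => tr (a * (p.1 * p.2)) = 1).card := by
  apply Finset.card_bij (fun p _ => ((p.1 + p.2), (p.1 - p.2)))
  · intro p hp
    simp only [mem_filter, mem_univ, true_and] at hp ⊢
    rw [show a * ((p.1 + p.2) * (p.1 - p.2)) = a * p.1^2 - a * p.2^2 by ring, map_sub]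
    exact hp
  · intro p _ q _ hpq
    have h1 : p.1 + p.2 = q.1 + q.2 := congrArg Prod.fst hpq
    have h2 : p.1 - p.2 = q.1 - q.2 := congrArg Prod.snd hpq
    have e1 : p.1 = q.1 := by
      apply mul_left_cancel₀ (two_ne_zero'' (F := F))
      linear_combination h1 + h2
    have e2 : p.2 = q.2 := by linear_combination h1 - e1
    exact Prod.ext e1 e2
  · intro q hq
    simp only [mem_filter, mem_univ, true_and] at hq
    refine ⟨(2⁻¹ * (q.1 + q.2), 2⁻¹ * (q.1 - q.2)), ?_, ?_⟩
    · simp only [mem_filter, mem_univ, true_and]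
      rw [← map_sub]
      rw [show a * (2⁻¹ * (q.1 + q.2))^2 - a * (2⁻¹ * (q.1 - q.2))^2
          = a * ((2⁻¹*2)^2 * (q.1 * q.2)) by ring]
      rw [inv_mul_cancel₀ (two_ne_zero'' (F := F))]
      simpa using hq
    · have h2 := two_ne_zero'' (F := F)
      ext <;> field_simp <;> ring



/-- decompose the xy-count into fiber products -/
theorem xy_decomp (a : F) :
    (univ.filter fun p : F × F => tr (a * p.1 ^ 2) - tr (a * p.2 ^ 2) = 1).card
      = ∑ s : ZMod 3, (univ.filter fun x : F => tr (a * x ^ 2) = s).card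
          * (univ.filter fun x : F => tr (a * x ^ 2) = s - 1).card := by
  rw [Finset.card_filter, Fintype.sum_prod_type]
  have key : ∀ s t : ZMod 3, (s - t = 1) ↔ (t = s - 1) := by decide
  have inner : ∀ x : F, (∑ y : F, if tr (a * x ^ 2) - tr (a * y ^ 2) = 1 then 1 else 0)
      = (univ.filter fun y : F => tr (a * y ^ 2) = tr (a * x ^ 2) - 1).card := by
    intro x
    rw [← Finset.card_filter]
    congr 1
    exact Finset.filter_congr fun y _ => by rw [key]
  rw [Finset.sum_congr rfl (fun x _ => inner x)]
  rw [← Finset.sum_fiberwise (univ : Finset F) (fun x => tr (a * x ^ 2))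
    (fun x => (univ.filter fun y : F => tr (a * y ^ 2) = tr (a * x ^ 2) - 1).card)]
  apply Finset.sum_congr rfl
  intro s _
  rw [Finset.sum_congr rfl (fun x hx => by
    rw [(Finset.mem_filter.mp hx).2] :
    ∀ x ∈ univ.filter (fun x : F => tr (a * x^2) = s), _)]
  rw [Finset.sum_const, smul_eq_mul]


theorem n0_val (hF : Fintype.card F = 3 ^ m) (hm : 1 ≤ m) (hmodd : Odd m)
    (a : F) (ha : a ≠ 0) :
    (univ.filter fun x : F => tr (a * x ^ 2) = 0).card = 3 ^ (m - 1) := by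
  have indep : ∀ a' : F, a' ≠ 0 →
      (univ.filter fun x : F => tr (a' * x ^ 2) = 0).card
        = (univ.filter fun x : F => tr (a * x ^ 2) = 0).card := by
    intro a' ha'
    rcases square_class hF hmodd a a' ha ha' with ⟨c, hc, rfl⟩ | ⟨c, hc, rfl⟩
    · exact n_scale a c hc 0
    · rw [n_scale (-a) c hc 0, n0_neg a]
  have hsum := double_count (F := F) hF hm
  rw [Finset.sum_congr rfl (fun a' ha' => indep a' (Finset.mem_filter.mp ha').2)] at hsum
  rw [Finset.sum_const, smul_eq_mul, Finset.filter_ne',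
    Finset.card_erase_of_mem (mem_univ _), Finset.card_univ, hF] at hsum
  have hq : 3 ≤ 3 ^ m := by
    calc (3:ℕ) = 3 ^ 1 := (pow_one 3).symm
    _ ≤ 3 ^ m := Nat.pow_le_pow_right (by norm_num) hm
  exact Nat.eq_of_mul_eq_mul_left (by omega) hsum

theorem n_dist (hF : Fintype.card F = 3 ^ m) (hm : 3 ≤ m) (hmodd : Odd m)
    (a : F) (ha : a ≠ 0) :
    (univ.filter fun x : F => tr (a * x ^ 2) = 0).card = (3 ^ ((m - 1) / 2)) ^ 2 ∧
    (((univ.filter fun x : F => tr (a * x ^ 2) = 1).card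
        = (3 ^ ((m - 1) / 2)) ^ 2 + 3 ^ ((m - 1) / 2) ∧
      (univ.filter fun x : F => tr (a * x ^ 2) = 2).card
        = (3 ^ ((m - 1) / 2)) ^ 2 - 3 ^ ((m - 1) / 2)) ∨
     ((univ.filter fun x : F => tr (a * x ^ 2) = 1).card
        = (3 ^ ((m - 1) / 2)) ^ 2 - 3 ^ ((m - 1) / 2) ∧
      (univ.filter fun x : F => tr (a * x ^ 2) = 2).card
        = (3 ^ ((m - 1) / 2)) ^ 2 + 3 ^ ((m - 1) / 2))) := by
  have hm1 : 1 ≤ m := by omega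
  set B := (3 : ℕ) ^ ((m - 1) / 2) with hB
  have hAB : (3 : ℕ) ^ (m - 1) = B ^ 2 := by
    rw [hB, ← pow_mul]
    congr 1
    obtain ⟨k, hk⟩ := hmodd
    omega
  have hsplit : (3:ℕ) ^ m = 3 * 3 ^ (m - 1) := by
    conv_lhs => rw [show m = 1 + (m-1) by omega]
    rw [pow_add, pow_one]
  set n : ZMod 3 → ℕ := fun s => (univ.filter fun x : F => tr (a * x ^ 2) = s).card with hn
  have h0 : n 0 = B ^ 2 := by rw [hn, ← hAB]; exact n0_val hF hm1 hmodd a ha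
  -- partition
  have hpart : n 0 + n 1 + n 2 = 3 * B ^ 2 := by
    have : ∑ s : ZMod 3, n s = Fintype.card F := by
      rw [hn, ← Finset.card_eq_sum_card_fiberwise (f := fun x : F => tr (a * x ^ 2))
        (t := (univ : Finset (ZMod 3))) (fun x _ => mem_univ _)]
      rfl
    rw [sum_zmod3 n] at this
    rw [this, hF, hsplit, hAB]
  -- cross
  have hcross : n 0 * n 2 + n 1 * n 0 + n 2 * n 1 = (3 * B ^ 2 - 1) * B ^ 2 := by
    have h1 := xy_decomp (F := F) a
    rw [xy_to_uv, uv_count hF hm1 a ha] at h1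
    rw [sum_zmod3 (fun s => n s * n (s - 1))] at h1
    rw [show (0 : ZMod 3) - 1 = 2 by decide, show (1 : ZMod 3) - 1 = 0 by decide,
      show (2 : ZMod 3) - 1 = 1 by decide] at h1
    rw [← h1, hsplit, hAB]
  refine ⟨h0, ?_⟩
  -- solve the quadratic system over ℤ
  have hBpos : 3 ≤ B := by
    rw [hB]
    calc (3:ℕ) = 3 ^ 1 := (pow_one 3).symm
    _ ≤ 3 ^ ((m-1)/2) := Nat.pow_le_pow_right (by norm_num) (by omega)
  have hsum : n 1 + n 2 = 2 * B ^ 2 := by omega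
  have hprod : (n 1 : ℤ) * n 2 = (B:ℤ) ^ 4 - (B:ℤ) ^ 2 := by
    have e0 : (n 0 : ℤ) = (B:ℤ)^2 := by exact_mod_cast h0
    have ec : (n 0 : ℤ) * n 2 + n 1 * n 0 + n 2 * n 1 = (3 * (B:ℤ)^2 - 1) * (B:ℤ)^2 := by
      have hge : 1 ≤ 3 * B ^ 2 := by nlinarith
      have := hcross
      zify [hge] at this
      exact this
    have es : (n 1 : ℤ) + n 2 = 2 * (B:ℤ)^2 := by exact_mod_cast hsum
    nlinarith [ec, es, e0]
  have hfac : ((n 1 : ℤ) - ((B:ℤ)^2 + B)) * ((n 1 : ℤ) - ((B:ℤ)^2 - B)) = 0 := by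
    have es : (n 1 : ℤ) + n 2 = 2 * (B:ℤ)^2 := by exact_mod_cast hsum
    linear_combination (n 1 : ℤ) * es - hprod
  have hB2 : B ≤ B ^ 2 := by nlinarith
  rcases mul_eq_zero.mp hfac with h | h
  · left
    have e1 : n 1 = B ^ 2 + B := by
      have : (n 1 : ℤ) = ((B^2 : ℕ) : ℤ) + ((B : ℕ) : ℤ) := by push_cast; linarith
      exact_mod_cast this
    have e2 : n 2 = B ^ 2 - B := by omega
    exact ⟨e1, e2⟩
  · right
    have e1 : (n 1 : ℤ) = ((B^2 : ℕ) : ℤ) - ((B : ℕ) : ℤ) := by push_cast; linarith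
    have e1' : n 1 = B ^ 2 - B := by omega
    have e2 : n 2 = B ^ 2 + B := by omega
    exact ⟨e1', e2⟩


theorem shift_count (a b c : F) (hc : 2 * a * c = b) (s : ZMod 3) :
    (univ.filter fun x : F => tr (a * x ^ 2 + b * x) = s).card
      = (univ.filter fun x : F => tr (a * x ^ 2) = s + tr (a * c ^ 2)).card := by
  apply Finset.card_bij (fun x _ => x + c)
  · intro x hx
    simp only [mem_filter, mem_univ, true_and] at hx ⊢
    rw [show a * (x + c)^2 = (a * x^2 + b * x) + a * c^2 by rw [← hc]; ring, map_add, hx]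
  · intro x _ y _ hxy
    exact add_right_cancel hxy
  · intro y hy
    simp only [mem_filter, mem_univ, true_and] at hy
    refine ⟨y - c, ?_, by ring⟩
    simp only [mem_filter, mem_univ, true_and]
    have : a * (y - c) ^ 2 + b * (y - c) = a * y ^ 2 - a * c ^ 2 := by rw [← hc]; ring
    rw [this, map_sub, hy]
    ring

theorem weight_eq (a b : F) (h : ZMod 3) :
    (univ.filter fun x : F => tr (a * x ^ 2 + b * x) + h ≠ 0).card
      = Fintype.card F - (univ.filter fun x : F => tr (a * x ^ 2 + b * x) = -h).card := by
  have hiff : ∀ x : F, (tr (a * x ^ 2 + b * x) + h ≠ 0)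
      ↔ ¬ (tr (a * x ^ 2 + b * x) = -h) := by
    intro x
    rw [ne_eq, add_eq_zero_iff_eq_neg]
  rw [Finset.filter_congr (fun x _ => hiff x), Finset.filter_not,
    Finset.card_sdiff_of_subset (Finset.filter_subset _ _), Finset.card_univ]

theorem exists_unique_h (hF : Fintype.card F = 3 ^ m) (hm : 3 ≤ m) (hmodd : Odd m)
    (a b : F) (ha : a ≠ 0) :
    ∃! h : ZMod 3,
      (univ.filter fun x : F => tr (a * x ^ 2 + b * x) + h ≠ 0).card
        = 2 * 3 ^ (m - 1) - 3 ^ ((m - 1) / 2) := by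
  have h2a : (2 : F) * a ≠ 0 := mul_ne_zero two_ne_zero'' ha
  set c : F := b * (2 * a)⁻¹ with hcdef
  have hc : 2 * a * c = b := by rw [hcdef, mul_comm, mul_assoc, inv_mul_cancel₀ h2a, mul_one]
  set e : ZMod 3 := tr (a * c ^ 2) with he
  set B := (3 : ℕ) ^ ((m - 1) / 2) with hB
  have hAB : (3 : ℕ) ^ (m - 1) = B ^ 2 := by
    rw [hB, ← pow_mul]
    congr 1
    obtain ⟨k, hk⟩ := hmodd
    omega
  have hq : Fintype.card F = 3 * B ^ 2 := by
    rw [hF, show m = 1 + (m-1) by omega, pow_add, pow_one, hAB]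
  have hBpos : 3 ≤ B := by
    rw [hB]
    calc (3:ℕ) = 3 ^ 1 := (pow_one 3).symm
    _ ≤ 3 ^ ((m-1)/2) := Nat.pow_le_pow_right (by norm_num) (by omega)
  have hB2 : B ≤ B ^ 2 := by nlinarith
  set n : ZMod 3 → ℕ := fun s => (univ.filter fun x : F => tr (a * x ^ 2) = s).card with hn
  obtain ⟨h0pre, hd⟩ := n_dist hF hm hmodd a ha
  have h0 : n 0 = B ^ 2 := h0pre
  have hw : ∀ h : ZMod 3,
      (univ.filter fun x : F => tr (a * x ^ 2 + b * x) + h ≠ 0).card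
        = 3 * B ^ 2 - n (-h + e) := by
    intro h
    rw [weight_eq, shift_count a b c hc, hq]
  have hle : ∀ s : ZMod 3, n s ≤ 3 * B ^ 2 := by
    intro s
    rw [← hq, ← Finset.card_univ]
    exact Finset.card_filter_le _ _
  have hcases : ∀ t : ZMod 3, t = 0 ∨ t = 1 ∨ t = 2 := by decide
  have hdnat : 2 * 3 ^ (m - 1) - 3 ^ ((m - 1) / 2) = 2 * B ^ 2 - B := by rw [hAB]
  -- unique s* with n s* = B^2 + B
  obtain ⟨s', hs', hs'uniq⟩ : ∃ s' : ZMod 3, n s' = B ^ 2 + B ∧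
      ∀ t : ZMod 3, n t = B ^ 2 + B → t = s' := by
    rcases hd with ⟨h1pre, h2pre⟩ | ⟨h1pre, h2pre⟩
    · have h1 : n 1 = B ^ 2 + B := h1pre
      have h2 : n 2 = B ^ 2 - B := h2pre
      refine ⟨1, h1, fun t ht => ?_⟩
      rcases hcases t with rfl | rfl | rfl
      · rw [h0] at ht; omega
      · rfl
      · rw [h2] at ht; omega
    · have h1 : n 1 = B ^ 2 - B := h1pre
      have h2 : n 2 = B ^ 2 + B := h2pre
      refine ⟨2, h2, fun t ht => ?_⟩
      rcases hcases t with rfl | rfl | rfl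
      · rw [h0] at ht; omega
      · rw [h1] at ht; omega
      · rfl
  refine ⟨e - s', ?_, ?_⟩
  · show (univ.filter fun x : F => tr (a * x ^ 2 + b * x) + (e - s') ≠ 0).card
        = 2 * 3 ^ (m - 1) - 3 ^ ((m - 1) / 2)
    rw [hw, hdnat, show -(e - s') + e = s' by ring, hs']
    omega
  · intro h' hh'
    have hh2 : (univ.filter fun x : F => tr (a * x ^ 2 + b * x) + h' ≠ 0).card
        = 2 * 3 ^ (m - 1) - 3 ^ ((m - 1) / 2) := hh'
    rw [hw, hdnat] at hh2
    clear hh'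
    have hh' := hh2
    have hnval : n (-h' + e) = B ^ 2 + B := by
      have := hle (-h' + e)
      omega
    have := hs'uniq _ hnval
    linear_combination -this


theorem weight_a0_b (hF : Fintype.card F = 3 ^ m) (hm : 1 ≤ m) (b : F) (hb : b ≠ 0)
    (h : ZMod 3) :
    (univ.filter fun x : F => tr ((0:F) * x ^ 2 + b * x) + h ≠ 0).card
      = 3 ^ m - 3 ^ (m - 1) := by
  rw [weight_eq, hF]
  congr 1
  have : ∀ x : F, (0:F) * x ^ 2 + b * x = b * x := fun x => by ring
  simp_rw [this]
  exact linear_fiber_card hF hm b hb (-h)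

theorem weight_a0_b0 (hF : Fintype.card F = 3 ^ m) (h : ZMod 3) :
    (univ.filter fun x : F => tr ((0:F) * x ^ 2 + (0:F) * x) + h ≠ 0).card
      = if h = 0 then 0 else 3 ^ m := by
  have : ∀ x : F, tr ((0:F) * x ^ 2 + (0:F) * x) + h = h := by
    intro x
    rw [show (0:F) * x ^ 2 + (0:F) * x = 0 by ring, map_zero, zero_add]
  simp_rw [this]
  by_cases hh : h = 0
  · simp [hh]
  · rw [if_neg hh, Finset.filter_true_of_mem (fun x _ => hh), Finset.card_univ, hF]

theorem param_inj (a a' b b' : F) (h h' : ZMod 3)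
    (heq : ∀ x : F, tr (a * x ^ 2 + b * x) + h = tr (a' * x ^ 2 + b' * x) + h') :
    a = a' ∧ b = b' ∧ h = h' := by
  have hh : h = h' := by
    have := heq 0
    simpa using this
  set α := a - a' with hα
  set β := b - b' with hβ
  have hg : ∀ x : F, tr (α * x ^ 2 + β * x) = 0 := by
    intro x
    have h1 := heq x
    rw [hh] at h1
    have h2 : tr (a * x ^ 2 + b * x) = tr (a' * x ^ 2 + b' * x) := by
      exact add_right_cancel h1
    rw [show α * x ^ 2 + β * x = (a * x ^ 2 + b * x) - (a' * x ^ 2 + b' * x) by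
      rw [hα, hβ]; ring, map_sub, h2, sub_self]
  have hbil : ∀ x : F, tr ((2 * α) * x) = 0 := by
    intro x
    have e : (2 * α) * x = (α * (x + 1) ^ 2 + β * (x + 1)) - (α * x ^ 2 + β * x)
        - (α * 1 ^ 2 + β * 1) := by ring
    rw [e, map_sub, map_sub, hg, hg, hg, sub_self, sub_zero]
  have hα0 : α = 0 := by
    by_contra hne
    obtain ⟨x, hx⟩ := exists_tr_eq (2 * α) (mul_ne_zero two_ne_zero'' hne) 1
    rw [hbil x] at hx
    exact one_ne_zero hx.symm
  have hβ0 : β = 0 := by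
    by_contra hne
    obtain ⟨x, hx⟩ := exists_tr_eq β hne 1
    have := hg x
    rw [hα0, zero_mul, zero_add] at this
    rw [this] at hx
    exact one_ne_zero hx.symm
  exact ⟨sub_eq_zero.mp hα0, sub_eq_zero.mp hβ0, hh⟩


theorem prod_filter_card (hF : Fintype.card F = 3 ^ m) :
    (univ.filter fun p : F × F => p.1 ≠ 0).card = 3 ^ m * (3 ^ m - 1) := by
  rw [Finset.card_filter, Fintype.sum_prod_type]
  have inner : ∀ u : F, (∑ _v : F, if u ≠ 0 then 1 else 0)
      = if u = 0 then 0 else 3 ^ m := by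
    intro u
    by_cases hu : u = 0
    · simp [hu]
    · simp [hu, Finset.card_univ, hF]
  rw [Finset.sum_congr rfl (fun u _ => inner u)]
  rw [Finset.sum_eq_sum_sdiff_singleton_add (mem_univ (0:F)), if_pos rfl, add_zero]
  rw [Finset.sum_congr rfl (fun u hu => if_neg (by simpa using (Finset.mem_sdiff.mp hu).2))]
  rw [Finset.sum_const, smul_eq_mul]
  rw [Finset.card_sdiff_of_subset (by simp), Finset.card_univ, hF, Finset.card_singleton]
  exact Nat.mul_comm _ _

end Aux

/-- for each `(a,b) ∈ GF(q)* × GF(q)` there is exactly one `h ∈ GF(3)`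
such that the codeword `(Tr(a x² + b x) + h)_x` has weight `d = 2·3^{m-1} - 3^{(m-1)/2}`,
and the number of weight-`d` codewords of `C(m,3)` is `q(q-1)`. -/
theorem unique_h_min_weight (m : ℕ) (hm : 3 ≤ m) (hmodd : Odd m)
    (F : Type) [Field F] [Fintype F] [DecidableEq F] [Algebra (ZMod 3) F]
    (hF : Fintype.card F = 3 ^ m) :
    (∀ a b : F, a ≠ 0 →
      ∃! h : ZMod 3,
        (Finset.univ.filter fun x : F =>
            Algebra.trace (ZMod 3) F (a * x ^ 2 + b * x) + h ≠ 0).card =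
          2 * 3 ^ (m - 1) - 3 ^ ((m - 1) / 2)) ∧
    {c : F → ZMod 3 | (∃ a b : F, ∃ h : ZMod 3,
        c = fun x => Algebra.trace (ZMod 3) F (a * x ^ 2 + b * x) + h) ∧
      (Finset.univ.filter fun x : F => c x ≠ 0).card =
        2 * 3 ^ (m - 1) - 3 ^ ((m - 1) / 2)}.ncard = 3 ^ m * (3 ^ m - 1) := by
  have hm1 : 1 ≤ m := by omega
  refine ⟨fun a b ha => exists_unique_h hF hm hmodd a b ha, ?_⟩
  classical
  -- numeric setup
  set B := (3 : ℕ) ^ ((m - 1) / 2) with hB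
  have hAB : (3 : ℕ) ^ (m - 1) = B ^ 2 := by
    rw [hB, ← pow_mul]
    congr 1
    obtain ⟨k, hk⟩ := hmodd
    omega
  have hq3 : (3 : ℕ) ^ m = 3 * B ^ 2 := by
    rw [show m = 1 + (m-1) by omega, pow_add, pow_one, hAB]
  have hBpos : 3 ≤ B := by
    rw [hB]
    calc (3:ℕ) = 3 ^ 1 := (pow_one 3).symm
    _ ≤ 3 ^ ((m-1)/2) := Nat.pow_le_pow_right (by norm_num) (by omega)
  have hB2 : B ≤ B ^ 2 := by nlinarith
  -- choice of the minimizing h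
  have Hex : ∀ p : F × F, ∃ hh : ZMod 3,
      p.1 ≠ 0 →
        ((univ.filter fun x : F =>
            Algebra.trace (ZMod 3) F (p.1 * x ^ 2 + p.2 * x) + hh ≠ 0).card
           = 2 * 3 ^ (m - 1) - 3 ^ ((m - 1) / 2)) ∧
        ∀ h' : ZMod 3, ((univ.filter fun x : F =>
            Algebra.trace (ZMod 3) F (p.1 * x ^ 2 + p.2 * x) + h' ≠ 0).card
           = 2 * 3 ^ (m - 1) - 3 ^ ((m - 1) / 2)) → h' = hh := by
    intro p
    by_cases hp : p.1 = 0
    · exact ⟨0, fun h => absurd hp h⟩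
    · obtain ⟨hh, h1, h2⟩ := exists_unique_h hF hm hmodd p.1 p.2 hp
      exact ⟨hh, fun _ => ⟨h1, h2⟩⟩
  choose f hf using Hex
  set T : Set (F × F) := {p | p.1 ≠ 0} with hT
  set Φ : F × F → (F → ZMod 3) :=
    fun p => fun x => Algebra.trace (ZMod 3) F (p.1 * x ^ 2 + p.2 * x) + f p with hΦ
  have hSeq : {c : F → ZMod 3 | (∃ a b : F, ∃ h : ZMod 3,
      c = fun x => Algebra.trace (ZMod 3) F (a * x ^ 2 + b * x) + h) ∧
      (Finset.univ.filter fun x : F => c x ≠ 0).card =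
        2 * 3 ^ (m - 1) - 3 ^ ((m - 1) / 2)} = Φ '' T := by
    ext c
    simp only [Set.mem_setOf_eq, Set.mem_image]
    constructor
    · rintro ⟨⟨a, b, h, rfl⟩, hwt⟩
      have hwt' : (univ.filter fun x : F =>
          Algebra.trace (ZMod 3) F (a * x ^ 2 + b * x) + h ≠ 0).card
          = 2 * 3 ^ (m - 1) - 3 ^ ((m - 1) / 2) := hwt
      have ha : a ≠ 0 := by
        intro ha0
        subst ha0
        by_cases hb : b = 0
        · subst hb
          rw [weight_a0_b0 hF] at hwt'
          rw [hAB] at hwt'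
          by_cases hh : h = 0
          · rw [if_pos hh] at hwt'
            omega
          · rw [if_neg hh, hq3] at hwt'
            omega
        · rw [weight_a0_b hF hm1 b hb, hq3, hAB] at hwt'
          omega
      have hfh : h = f (a, b) := (hf (a, b) ha).2 h hwt'
      refine ⟨(a, b), ha, ?_⟩
      subst hfh
      rfl
    · rintro ⟨p, hp, rfl⟩
      exact ⟨⟨p.1, p.2, f p, rfl⟩, (hf p hp).1⟩
  have hinj : T.InjOn Φ := by
    intro p hp p' hp' heq
    obtain ⟨e1, e2, _⟩ := param_inj p.1 p'.1 p.2 p'.2 (f p) (f p')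
      (fun x => congrFun heq x)
    exact Prod.ext e1 e2
  rw [hSeq, Set.ncard_image_of_injOn hinj]
  have hTF : T = ↑(univ.filter fun p : F × F => p.1 ≠ 0) := by
    ext p
    simp [hT]
  rw [hTF, Set.ncard_coe_finset]
  exact prod_filter_card hF
end

section
/- Let q = 3^m with m ≥ 2 and let α be a normal basis generator of GF(q) over GF(3) (i.e., {α^{3^i} : 0 ≤ i ≤ m-1} is a basis). Then the GF(3)-linear span of the functions x ↦ Tr(a x)·Tr(b x) over all a, b ∈ GF(q) equals the set of functions of the form x ↦ Σ_{j=0}^{m-1} Tr(c_j x^{3^j + 1}) with c_j ∈ GF(q). -/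
open Finset

/-- given a normal basis generator `α` of `GF(3^m)` over `GF(3)`,
the `GF(3)`-span of the functions `x ↦ Tr(a x)·Tr(b x)` equals the set of functions
`x ↦ ∑_j Tr(c_j x^{3^j + 1})`. -/
theorem span_tr_ax_tr_bx (m : ℕ) (hm : 2 ≤ m)
    (F : Type) [Field F] [Fintype F] [Algebra (ZMod 3) F]
    (hF : Fintype.card F = 3 ^ m)
    (α : F) (hα : LinearIndependent (ZMod 3) fun i : Fin m => α ^ (3 ^ (i : ℕ))) :
    (Submodule.span (ZMod 3)
        {f : F → ZMod 3 | ∃ a b : F, f = fun x =>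
          Algebra.trace (ZMod 3) F (a * x) * Algebra.trace (ZMod 3) F (b * x)} :
      Set (F → ZMod 3)) =
    {f : F → ZMod 3 | ∃ c : Fin m → F, f = fun x =>
      ∑ j : Fin m, Algebra.trace (ZMod 3) F (c j * x ^ (3 ^ (j : ℕ) + 1))} := by
  haveI : Fact (Nat.Prime 3) := ⟨by norm_num⟩
  haveI : NeZero m := ⟨by omega⟩
  haveI : Nonempty (Fin m) := ⟨⟨0, by omega⟩⟩
  have hinj3 : Function.Injective (algebraMap (ZMod 3) F) := (algebraMap (ZMod 3) F).injective
  haveI : CharP F 3 := charP_of_injective_algebraMap hinj3 3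
  set S : Set (F → ZMod 3) :=
    {f : F → ZMod 3 | ∃ a b : F, f = fun x =>
      Algebra.trace (ZMod 3) F (a * x) * Algebra.trace (ZMod 3) F (b * x)} with hS
  have hfr : Module.finrank (ZMod 3) F = m := by
    have := Module.card_eq_pow_finrank (K := ZMod 3) (V := F)
    rw [ZMod.card, hF] at this
    exact (Nat.pow_right_injective (by norm_num) this.symm)
  have hcardAut : Fintype.card (F ≃ₐ[ZMod 3] F) = m := by
    rw [← Nat.card_eq_fintype_card, IsGalois.card_aut_eq_finrank, hfr]
  -- Frobenius iterates as algebra automorphisms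
  have hbij : ∀ n : ℕ, Function.Bijective (iterateFrobenius F 3 n) := fun n =>
    Finite.injective_iff_bijective.mp (iterateFrobenius F 3 n).injective
  let e : Fin m → (F ≃ₐ[ZMod 3] F) := fun i =>
    { RingEquiv.ofBijective (iterateFrobenius F 3 (i : ℕ)) (hbij i) with
      commutes' := fun c => by
        show (algebraMap (ZMod 3) F c) ^ (3:ℕ) ^ (i:ℕ) = algebraMap (ZMod 3) F c
        rw [← map_pow, ZMod.pow_card_pow] }
  have he : ∀ (i : Fin m) (z : F), e i z = z ^ (3:ℕ) ^ (i : ℕ) := fun i z => rfl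
  have einj : Function.Injective e := by
    intro i j h
    exact hα.injective (by simpa [he] using congrArg (fun σ => σ α) h)
  let eqv : Fin m ≃ (F ≃ₐ[ZMod 3] F) :=
    Equiv.ofBijective e ((Fintype.bijective_iff_injective_and_card e).mpr
      ⟨einj, by simp [hcardAut]⟩)
  -- trace as sum of Frobenius powers
  have tf : ∀ z : F, algebraMap (ZMod 3) F (Algebra.trace (ZMod 3) F z)
      = ∑ i : Fin m, z ^ (3:ℕ) ^ (i : ℕ) := by
    intro z
    rw [trace_eq_sum_automorphisms, ← Equiv.sum_comp eqv (fun σ => σ z)]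
    exact Finset.sum_congr rfl fun i _ => he i z
  have hq : ∀ z : F, z ^ (3:ℕ) ^ m = z := fun z => by
    have := FiniteField.pow_card z; rwa [hF] at this
  have pcm : ∀ (n : ℕ) (z : F), z ^ (3:ℕ) ^ n = z ^ (3:ℕ) ^ (n % m) := by
    intro n
    induction n using Nat.strong_induction_on with
    | _ n ih =>
      intro z
      rcases lt_or_ge n m with h | h
      · rw [Nat.mod_eq_of_lt h]
      · obtain ⟨t, rfl⟩ : ∃ t, n = m + t := ⟨n - m, by omega⟩
        rw [pow_add, pow_mul, hq, ih t (by omega), Nat.add_mod_left]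
  -- key product identity
  have L1 : ∀ a b : F,
      (fun x => Algebra.trace (ZMod 3) F (a * x) * Algebra.trace (ZMod 3) F (b * x))
      = fun x => ∑ k : Fin m,
          Algebra.trace (ZMod 3) F (a * b ^ (3:ℕ) ^ (k:ℕ) * x ^ ((3:ℕ) ^ (k:ℕ) + 1)) := by
    intro a b; funext x
    apply hinj3
    rw [map_mul, map_sum, tf, tf, Finset.sum_mul_sum]
    simp_rw [tf]
    conv_rhs => rw [Finset.sum_comm]
    refine Finset.sum_congr rfl fun i _ => ?_
    rw [← Equiv.sum_comp (Equiv.addLeft i)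
      (fun j : Fin m => (a*x) ^ (3:ℕ)^(i:ℕ) * (b*x) ^ (3:ℕ)^(j:ℕ))]
    refine Finset.sum_congr rfl fun k _ => ?_
    have hv : ((Equiv.addLeft i k : Fin m) : ℕ) = ((i:ℕ) + (k:ℕ)) % m := by
      simp [Fin.add_def]
    rw [hv, ← pcm ((i:ℕ)+(k:ℕ)) (b*x)]
    have e1 : (3:ℕ)^(k:ℕ) * 3^(i:ℕ) = 3 ^ ((i:ℕ)+(k:ℕ)) := by
      rw [← pow_add, Nat.add_comm]
    have e2 : ((3:ℕ)^(k:ℕ) + 1) * 3^(i:ℕ) = 3 ^ ((i:ℕ)+(k:ℕ)) + 3^(i:ℕ) := by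
      rw [add_mul, one_mul, ← pow_add, Nat.add_comm (k:ℕ)]
    rw [mul_pow a x, mul_pow b x, mul_pow, mul_pow, ← pow_mul b, ← pow_mul x, e1, e2, pow_add x]
    ring
  -- normal basis and trace-dual functionals
  let B : Module.Basis (Fin m) (ZMod 3) F :=
    basisOfLinearIndependentOfCardEqFinrank hα (by simp [hfr])
  have nd : (Algebra.traceForm (ZMod 3) F).Nondegenerate := traceForm_nondegenerate (ZMod 3) F
  let u : Fin m → F := fun i => ((Algebra.traceForm (ZMod 3) F).toDual nd).symm (B.coord i)
  have hu : ∀ (i : Fin m) (x : F), Algebra.trace (ZMod 3) F (u i * x) = B.repr x i := by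
    intro i x
    have h := LinearMap.BilinForm.apply_toDual_symm_apply (B := Algebra.traceForm (ZMod 3) F)
      (hB := nd) (f := B.coord i) (v := x)
    simpa only [Algebra.traceForm_apply, Module.Basis.coord_apply] using h
  have hxj : ∀ (j : Fin m) (x : F), x ^ (3:ℕ) ^ (j:ℕ)
      = ∑ i : Fin m, B.repr x i • (B i) ^ (3:ℕ) ^ (j:ℕ) := by
    intro j x
    rw [← he j x]
    conv_lhs => rw [← B.sum_repr x]
    rw [map_sum]
    exact Finset.sum_congr rfl fun i _ => by rw [map_smul, he]
  have key : ∀ (c : F) (j : Fin m) (x : F),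
      Algebra.trace (ZMod 3) F (c * x ^ ((3:ℕ) ^ (j:ℕ) + 1)) =
      ∑ p : Fin m × Fin m,
        Algebra.trace (ZMod 3) F (c * (B p.1) ^ (3:ℕ) ^ (j:ℕ) * B p.2) *
        (Algebra.trace (ZMod 3) F (u p.1 * x) * Algebra.trace (ZMod 3) F (u p.2 * x)) := by
    intro c j x
    have expand : ∀ (v w : Fin m → F) (t : Fin m → ZMod 3),
        c * (∑ i, t i • v i) * (∑ i, t i • w i)
        = ∑ p : Fin m × Fin m, (t p.1 * t p.2) • (c * v p.1 * w p.2) := by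
      intro v w t
      rw [Fintype.sum_prod_type, mul_assoc, Finset.sum_mul_sum, Finset.mul_sum]
      refine sum_congr rfl fun i _ => ?_
      rw [Finset.mul_sum]
      refine sum_congr rfl fun i' _ => ?_
      rw [smul_mul_smul_comm, mul_smul_comm, mul_assoc]
    have hx2 : c * x ^ ((3:ℕ) ^ (j:ℕ) + 1) =
        ∑ p : Fin m × Fin m, (B.repr x p.1 * B.repr x p.2) •
          (c * (B p.1) ^ (3:ℕ) ^ (j:ℕ) * B p.2) := by
      rw [← expand (fun i => (B i) ^ (3:ℕ) ^ (j:ℕ)) B (fun i => B.repr x i),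
        ← hxj, B.sum_repr, pow_succ, mul_assoc]
    rw [hx2, map_sum]
    refine Finset.sum_congr rfl fun p _ => ?_
    rw [map_smul, hu, hu, smul_eq_mul]
    ring
  -- each single term is in the span
  have L2 : ∀ (c : F) (j : Fin m),
      (fun x => Algebra.trace (ZMod 3) F (c * x ^ ((3:ℕ) ^ (j:ℕ) + 1)))
        ∈ Submodule.span (ZMod 3) S := by
    intro c j
    have hfun : (fun x => Algebra.trace (ZMod 3) F (c * x ^ ((3:ℕ) ^ (j:ℕ) + 1)))
        = ∑ p : Fin m × Fin m,
            Algebra.trace (ZMod 3) F (c * (B p.1) ^ (3:ℕ) ^ (j:ℕ) * B p.2) •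
            (fun x => Algebra.trace (ZMod 3) F (u p.1 * x)
              * Algebra.trace (ZMod 3) F (u p.2 * x)) := by
      funext x
      rw [key c j x, Finset.sum_apply]
      exact Finset.sum_congr rfl fun p _ => by simp [smul_eq_mul]
    rw [hfun]
    exact Submodule.sum_mem _ fun p _ => Submodule.smul_mem _ _
      (Submodule.subset_span ⟨u p.1, u p.2, rfl⟩)
  -- the RHS as the range of a linear map
  let L : (Fin m → F) →ₗ[ZMod 3] (F → ZMod 3) :=
    { toFun := fun c => fun x =>
        ∑ j : Fin m, Algebra.trace (ZMod 3) F (c j * x ^ (3 ^ (j : ℕ) + 1))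
      map_add' := by
        intro c d; funext x
        simp only [Pi.add_apply, ← Finset.sum_add_distrib]
        exact Finset.sum_congr rfl fun j _ => by rw [add_mul, map_add]
      map_smul' := by
        intro r c; funext x
        simp only [Pi.smul_apply, RingHom.id_apply, smul_eq_mul, Finset.mul_sum]
        refine Finset.sum_congr rfl fun j _ => ?_
        rw [smul_mul_assoc, map_smul, smul_eq_mul] }
  ext f
  simp only [SetLike.mem_coe, Set.mem_setOf_eq]
  constructor
  · intro hf
    have hle : Submodule.span (ZMod 3) S ≤ LinearMap.range L := by
      rw [Submodule.span_le]
      rintro g ⟨a, b, rfl⟩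
      exact ⟨fun k => a * b ^ (3:ℕ) ^ (k:ℕ), (L1 a b).symm⟩
    obtain ⟨c, hc⟩ := hle hf
    exact ⟨c, hc.symm⟩
  · rintro ⟨c, rfl⟩
    have hsum : (fun x => ∑ j : Fin m,
        Algebra.trace (ZMod 3) F (c j * x ^ (3 ^ (j : ℕ) + 1)))
        = ∑ j : Fin m,
            (fun x => Algebra.trace (ZMod 3) F (c j * x ^ ((3:ℕ) ^ (j : ℕ) + 1))) := by
      funext x; rw [Finset.sum_apply]
    rw [hsum]
    exact Submodule.sum_mem _ fun j _ => L2 (c j) j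
end

section
/- Let q = 3^m with m ≥ 2. The GF(3)-linear span of the functions x ↦ Tr(a x^2)·Tr(b x) over all a, b ∈ GF(q) equals the set of functions x ↦ Σ_{j=0}^{m-1} Tr(c_j x^{2·3^j + 1}) with c_j ∈ GF(q). -/
open Finset Polynomial

namespace STAux14

variable {F : Type} [Field F] [Fintype F] [Algebra (ZMod 3) F]

local notation "Tr" => Algebra.trace (ZMod 3) F

lemma charP3 : CharP F 3 := charP_of_injective_algebraMap' (ZMod 3) 3

/-- The Frobenius as an algebra equivalence over `ZMod 3`. -/
noncomputable def frobAE : F ≃ₐ[ZMod 3] F :=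
  haveI : CharP F 3 := charP3
  haveI : Fact (Nat.Prime 3) := ⟨by norm_num⟩
  AlgEquiv.ofBijective
    { toRingHom := frobenius F 3
      commutes' := fun r => by
        show frobenius F 3 (algebraMap (ZMod 3) F r) = algebraMap (ZMod 3) F r
        rw [frobenius_def, ← map_pow]
        congr 1
        exact ZMod.pow_card r }
    (Finite.injective_iff_bijective.mp (frobenius_inj F 3))

lemma frobAE_apply (x : F) : (frobAE : F ≃ₐ[ZMod 3] F) x = x ^ 3 := rfl

lemma frobAE_pow_apply (k : ℕ) : ∀ x : F, ((frobAE ^ k : F ≃ₐ[ZMod 3] F)) x = x ^ 3 ^ k := by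
  induction k with
  | zero => intro x; simp
  | succ n ih =>
    intro x
    rw [pow_succ, AlgEquiv.mul_apply, frobAE_apply, ih, ← pow_mul, ← pow_succ']

lemma trace_pow_three (x : F) : Tr (x ^ 3) = Tr x := by
  have h := Algebra.trace_eq_of_algEquiv (frobAE : F ≃ₐ[ZMod 3] F) x
  rwa [frobAE_apply] at h

lemma trace_pow_pow (k : ℕ) (x : F) : Tr (x ^ 3 ^ k) = Tr x := by
  induction k with
  | zero => simp
  | succ n ih => rw [pow_succ, pow_mul, trace_pow_three, ih]

variable {m : ℕ}

lemma finrank_eq (hF : Fintype.card F = 3 ^ m) : Module.finrank (ZMod 3) F = m := by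
  have h := Module.card_eq_pow_finrank (K := ZMod 3) (V := F)
  rw [ZMod.card, hF] at h
  exact (Nat.pow_right_injective (by norm_num) h.symm)

lemma pow_card_self (hF : Fintype.card F = 3 ^ m) (x : F) : x ^ 3 ^ m = x := by
  rw [← hF]; exact FiniteField.pow_card x

lemma frob_injective (hF : Fintype.card F = 3 ^ m) :
    Function.Injective (fun i : Fin m => (frobAE ^ (i : ℕ) : F ≃ₐ[ZMod 3] F)) := by
  have key : ∀ i j : Fin m, i ≤ j →
      (frobAE ^ (i : ℕ) : F ≃ₐ[ZMod 3] F) = frobAE ^ (j : ℕ) → i = j := by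
    intro i j hij h
    by_contra hne
    set d : ℕ := (j : ℕ) - (i : ℕ) with hd
    have hd0 : d ≠ 0 := by
      simp only [hd]
      have : (i : ℕ) ≠ (j : ℕ) := fun hh => hne (Fin.ext hh)
      omega
    have hdm : d < m := by have := j.isLt; omega
    have hfix : ∀ x : F, x ^ 3 ^ d = x := by
      intro x
      have h1 : (frobAE ^ (i : ℕ) : F ≃ₐ[ZMod 3] F) (x ^ 3 ^ d) =
          (frobAE ^ (i : ℕ) : F ≃ₐ[ZMod 3] F) x := by
        rw [frobAE_pow_apply, frobAE_pow_apply, ← pow_mul, ← pow_add]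
        have : d + (i : ℕ) = (j : ℕ) := by omega
        rw [this, ← frobAE_pow_apply (j : ℕ) x, ← h, frobAE_pow_apply]
      exact (frobAE ^ (i : ℕ) : F ≃ₐ[ZMod 3] F).injective h1
    -- the polynomial X^(3^d) - X vanishes everywhere but has small degree
    have hQ : (X ^ 3 ^ d - X : F[X]) = 0 := by
      apply Polynomial.eq_zero_of_natDegree_lt_card_of_eval_eq_zero _
        (Function.injective_id)
      · intro x
        simp [hfix x]
      · haveI : CharP F 3 := charP3
        rw [FiniteField.X_pow_card_pow_sub_X_natDegree_eq F (p := 3) hd0 (by norm_num), hF]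
        exact Nat.pow_lt_pow_right (by norm_num) hdm
    exact FiniteField.X_pow_card_pow_sub_X_ne_zero F (p := 3) hd0 (by norm_num) hQ
  intro i j h
  rcases le_total i j with hij | hij
  · exact key i j hij h
  · exact (key j i hij h.symm).symm

lemma algebraMap_trace (hF : Fintype.card F = 3 ^ m) (x : F) :
    algebraMap (ZMod 3) F (Tr x) = ∑ i : Fin m, x ^ 3 ^ (i : ℕ) := by
  haveI : FiniteDimensional (ZMod 3) F := Module.Finite.of_finite
  rw [trace_eq_sum_automorphisms]
  have hbij : Function.Bijective (fun i : Fin m => (frobAE ^ (i : ℕ) : F ≃ₐ[ZMod 3] F)) := by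
    rw [Fintype.bijective_iff_injective_and_card]
    refine ⟨frob_injective hF, ?_⟩
    rw [Fintype.card_fin, ← Nat.card_eq_fintype_card, IsGalois.card_aut_eq_finrank, finrank_eq hF]
  exact (Fintype.sum_bijective _ hbij (fun i : Fin m => x ^ 3 ^ (i : ℕ))
    (fun σ : F ≃ₐ[ZMod 3] F => σ x) (fun i => (frobAE_pow_apply (i : ℕ) x).symm)).symm

lemma trace_mul_trace (hF : Fintype.card F = 3 ^ m) (u v : F) :
    Tr u * Tr v = ∑ i : Fin m, Tr (u * v ^ 3 ^ (i : ℕ)) := by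
  have h1 : (Tr v) • u = ∑ i : Fin m, v ^ 3 ^ (i : ℕ) * u := by
    rw [Algebra.smul_def, algebraMap_trace hF, Finset.sum_mul]
  calc Tr u * Tr v = (Tr v) • (Tr u) := by rw [smul_eq_mul, mul_comm]
    _ = Tr ((Tr v) • u) := (map_smul Tr _ _).symm
    _ = ∑ i : Fin m, Tr (v ^ 3 ^ (i : ℕ) * u) := by rw [h1, map_sum]
    _ = ∑ i : Fin m, Tr (u * v ^ 3 ^ (i : ℕ)) := by simp_rw [mul_comm]

lemma shift (hF : Fintype.card F = 3 ^ m) (j : ℕ) (hj1 : 1 ≤ j) (hjm : j < m) (e x : F) :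
    Tr (e * x ^ (2 + 3 ^ j)) = Tr (e ^ 3 ^ (m - j) * x ^ (2 * 3 ^ (m - j) + 1)) := by
  rw [← trace_pow_pow (m - j) (e * x ^ (2 + 3 ^ j))]
  congr 1
  rw [mul_pow, ← pow_mul]
  congr 1
  have hexp : (2 + 3 ^ j) * 3 ^ (m - j) = 2 * 3 ^ (m - j) + 3 ^ m := by
    rw [add_mul, ← pow_add]
    congr 2
    omega
  rw [hexp, pow_add, pow_card_self hF, ← pow_succ]

lemma shift' (hm : 1 ≤ m) (hF : Fintype.card F = 3 ^ m) (j : Fin m) (e x : F) :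
    Tr (e * x ^ (2 + 3 ^ (j : ℕ))) =
      Tr (e ^ 3 ^ (((-j : Fin m)) : ℕ) * x ^ (2 * 3 ^ (((-j : Fin m)) : ℕ) + 1)) := by
  haveI : NeZero m := ⟨by omega⟩
  by_cases hj : j = 0
  · subst hj
    norm_num
  · have hjv : (j : ℕ) ≠ 0 := fun hh => hj (Fin.ext (by simpa using hh))
    have hv : ((-j : Fin m) : ℕ) = m - (j : ℕ) := by
      rw [Fin.coe_neg]
      exact Nat.mod_eq_of_lt (by have := j.isLt; omega)
    rw [hv]
    exact shift hF (j : ℕ) (by omega) j.isLt e x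

lemma pow_neg_cancel (hm : 1 ≤ m) (hF : Fintype.card F = 3 ^ m) (k : Fin m) (y : F) :
    (y ^ 3 ^ ((-k : Fin m) : ℕ)) ^ 3 ^ (k : ℕ) = y := by
  haveI : NeZero m := ⟨by omega⟩
  by_cases hk : k = 0
  · subst hk; norm_num
  · have hkv : (k : ℕ) ≠ 0 := fun hh => hk (Fin.ext (by simpa using hh))
    have hv : ((-k : Fin m) : ℕ) = m - (k : ℕ) := by
      rw [Fin.coe_neg]
      exact Nat.mod_eq_of_lt (by have := k.isLt; omega)
    rw [hv, ← pow_mul, ← pow_add]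
    have : m - (k : ℕ) + (k : ℕ) = m := by have := k.isLt; omega
    rw [this]
    exact pow_card_self hF y

variable (m F) in
/-- the linear map `c ↦ (x ↦ ∑ j, Tr (c j * x ^ (2 + 3 ^ j)))`. -/
noncomputable def L1 : (Fin m → F) →ₗ[ZMod 3] (F → ZMod 3) where
  toFun c := fun x => ∑ j : Fin m, Tr (c j * x ^ (2 + 3 ^ (j : ℕ)))
  map_add' c c' := by
    funext x
    simp [Pi.add_apply, add_mul, ← Finset.sum_add_distrib]
  map_smul' r c := by
    funext x
    simp [Pi.smul_apply, smul_mul_assoc, Finset.smul_sum, Finset.mul_sum]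

variable (m F) in
/-- the linear map `c ↦ (x ↦ ∑ j, Tr (c j * x ^ (2 * 3 ^ j + 1)))`. -/
noncomputable def L2 : (Fin m → F) →ₗ[ZMod 3] (F → ZMod 3) where
  toFun c := fun x => ∑ j : Fin m, Tr (c j * x ^ (2 * 3 ^ (j : ℕ) + 1))
  map_add' c c' := by
    funext x
    simp [Pi.add_apply, add_mul, ← Finset.sum_add_distrib]
  map_smul' r c := by
    funext x
    simp [Pi.smul_apply, smul_mul_assoc, Finset.smul_sum, Finset.mul_sum]

lemma L1_eq_L2 (hm : 1 ≤ m) (hF : Fintype.card F = 3 ^ m) (c : Fin m → F) :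
    L1 F m c = L2 F m (fun k => (c (-k)) ^ 3 ^ (k : ℕ)) := by
  haveI : NeZero m := ⟨by omega⟩
  funext x
  show ∑ j : Fin m, Tr (c j * x ^ (2 + 3 ^ (j : ℕ)))
      = ∑ k : Fin m, Tr ((c (-k)) ^ 3 ^ (k : ℕ) * x ^ (2 * 3 ^ (k : ℕ) + 1))
  rw [show (∑ j : Fin m, Tr (c j * x ^ (2 + 3 ^ (j : ℕ)))) =
      ∑ j : Fin m, Tr ((c j) ^ 3 ^ (((-j : Fin m)) : ℕ) * x ^ (2 * 3 ^ (((-j : Fin m)) : ℕ) + 1))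
    from Finset.sum_congr rfl (fun j _ => shift' hm hF j (c j) x)]
  exact Fintype.sum_bijective (fun j : Fin m => -j) (neg_involutive.bijective) _ _
    (fun j => by simp)

lemma L2_eq_L1 (hm : 1 ≤ m) (hF : Fintype.card F = 3 ^ m) (d : Fin m → F) :
    L2 F m d = L1 F m (fun j => (d (-j)) ^ 3 ^ (j : ℕ)) := by
  haveI : NeZero m := ⟨by omega⟩
  set c : Fin m → F := fun j => (d (-j)) ^ 3 ^ (j : ℕ) with hc
  rw [L1_eq_L2 hm hF c]
  congr 1
  funext k
  simp only [hc, neg_neg]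
  exact (pow_neg_cancel hm hF k (d k)).symm

lemma gen_eq_L1 (hF : Fintype.card F = 3 ^ m) (a b : F) :
    (fun x => Tr (a * x ^ 2) * Tr (b * x)) = L1 F m (fun j => a * b ^ 3 ^ (j : ℕ)) := by
  funext x
  show Tr (a * x ^ 2) * Tr (b * x) = ∑ j : Fin m, Tr (a * b ^ 3 ^ (j : ℕ) * x ^ (2 + 3 ^ (j : ℕ)))
  rw [trace_mul_trace hF]
  refine Finset.sum_congr rfl (fun j _ => ?_)
  congr 1
  rw [mul_pow, pow_add]
  ring

/-- the vectors `w b = (b ^ 3 ^ j)_j` span `F^m` over `F`. -/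
lemma span_w_top (hF : Fintype.card F = 3 ^ m) :
    Submodule.span F (Set.range (fun b : F => fun j : Fin m => b ^ 3 ^ (j : ℕ))) = ⊤ := by
  by_contra h
  have hlt : Submodule.span F (Set.range (fun b : F => fun j : Fin m => b ^ 3 ^ (j : ℕ))) < ⊤ :=
    lt_of_le_of_ne le_top h
  obtain ⟨f, hf0, hfmap⟩ := Submodule.exists_dual_map_eq_bot_of_lt_top hlt inferInstance
  have hvanish : ∀ b : F, f (fun j : Fin m => b ^ 3 ^ (j : ℕ)) = 0 := by
    intro b
    have hmem : (fun j : Fin m => b ^ 3 ^ (j : ℕ)) ∈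
        Submodule.span F (Set.range (fun b : F => fun j : Fin m => b ^ 3 ^ (j : ℕ))) :=
      Submodule.subset_span (Set.mem_range_self b)
    have : f (fun j : Fin m => b ^ 3 ^ (j : ℕ)) ∈
        (Submodule.span F (Set.range (fun b : F => fun j : Fin m => b ^ 3 ^ (j : ℕ)))).map f :=
      Submodule.mem_map_of_mem hmem
    rwa [hfmap, Submodule.mem_bot] at this
  set d : Fin m → F := fun i => f (fun j => if i = j then 1 else 0) with hd
  set P : F[X] := ∑ j : Fin m, C (d j) * X ^ (3 ^ (j : ℕ)) with hP
  have heval : ∀ b : F, P.eval b = 0 := by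
    intro b
    have h1 := hvanish b
    rw [LinearMap.pi_apply_eq_sum_univ f (fun j : Fin m => b ^ 3 ^ (j : ℕ))] at h1
    rw [hP]
    simp only [eval_finset_sum, eval_mul, eval_C, eval_pow, eval_X]
    rw [← h1]
    refine Finset.sum_congr rfl (fun i _ => ?_)
    rw [smul_eq_mul, mul_comm]
  have hdeg : P.natDegree < Fintype.card F := by
    have h1 : P.natDegree ≤ 3 ^ (m - 1) := by
      refine Polynomial.natDegree_sum_le_of_forall_le _ _ (fun j _ => ?_)
      refine le_trans (Polynomial.natDegree_C_mul_le _ _) ?_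
      rw [Polynomial.natDegree_X_pow]
      exact Nat.pow_le_pow_right (by norm_num) (by have := j.isLt; omega)
    rw [hF]
    calc P.natDegree ≤ 3 ^ (m - 1) := h1
      _ < 3 ^ m := Nat.pow_lt_pow_right (by norm_num)
          (by
            have : 1 ≤ m := by
              by_contra hm0
              have hm0' : m = 0 := by omega
              subst hm0'
              have : (1 : ℕ) < 1 := by
                calc (1 : ℕ) < Fintype.card F := Fintype.one_lt_card
                  _ = 3 ^ 0 := hF
                  _ = 1 := by norm_num
              omega
            omega)
  have hP0 : P = 0 :=
    Polynomial.eq_zero_of_natDegree_lt_card_of_eval_eq_zero P Function.injective_id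
      (fun x => heval x) hdeg
  have hdzero : ∀ j : Fin m, d j = 0 := by
    intro j
    have hcoeff : P.coeff (3 ^ (j : ℕ)) = d j := by
      rw [hP, Polynomial.finset_sum_coeff]
      rw [Finset.sum_eq_single j]
      · simp
      · intro i _ hij
        rw [Polynomial.coeff_C_mul, Polynomial.coeff_X_pow, if_neg, mul_zero]
        intro hh
        exact hij (Fin.ext (Nat.pow_right_injective (by norm_num) hh.symm))
      · intro hj
        exact absurd (Finset.mem_univ j) hj
    rw [hP0] at hcoeff
    simpa using hcoeff.symm
  apply hf0
  apply LinearMap.ext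
  intro c
  rw [LinearMap.pi_apply_eq_sum_univ f c]
  have hz : ∀ i : Fin m, f (fun j => if i = j then 1 else 0) = 0 := fun i => hdzero i
  simp [hz]

lemma L1_mem_span (hm : 1 ≤ m) (hF : Fintype.card F = 3 ^ m) (c : Fin m → F) :
    L1 F m c ∈ Submodule.span (ZMod 3)
      {f : F → ZMod 3 | ∃ a b : F, f = fun x => Tr (a * x ^ 2) * Tr (b * x)} := by
  set gens : Set (F → ZMod 3) :=
    {f : F → ZMod 3 | ∃ a b : F, f = fun x => Tr (a * x ^ 2) * Tr (b * x)} with hgens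
  have key : ∀ c ∈ Submodule.span F
      (Set.range (fun b : F => fun j : Fin m => b ^ 3 ^ (j : ℕ))),
      ∀ a : F, L1 F m (a • c) ∈ Submodule.span (ZMod 3) gens := by
    intro c hc
    induction hc using Submodule.span_induction with
    | mem v hv =>
      obtain ⟨b, rfl⟩ := hv
      intro a
      apply Submodule.subset_span
      refine ⟨a, b, ?_⟩
      have : (a • fun j : Fin m => b ^ 3 ^ (j : ℕ)) = fun j : Fin m => a * b ^ 3 ^ (j : ℕ) := by
        funext j; simp [smul_eq_mul]
      rw [this, ← gen_eq_L1 hF a b]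
    | zero =>
      intro a
      simp only [smul_zero, map_zero]
      exact Submodule.zero_mem _
    | add v w _ _ hv hw =>
      intro a
      rw [smul_add, map_add]
      exact Submodule.add_mem _ (hv a) (hw a)
    | smul t v _ hv =>
      intro a
      rw [smul_smul]
      exact hv (a * t)
  have hc : c ∈ Submodule.span F (Set.range (fun b : F => fun j : Fin m => b ^ 3 ^ (j : ℕ))) := by
    rw [span_w_top hF]; trivial
  have := key c hc 1
  rwa [one_smul] at this

end STAux14

open Finset

/-- the `GF(3)`-span of the functions `x ↦ Tr(a x²)·Tr(b x)` equals the
set of functions `x ↦ ∑_j Tr(c_j x^{2·3^j + 1})`. -/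
theorem span_tr_ax2_tr_bx (m : ℕ) (hm : 2 ≤ m)
    (F : Type) [Field F] [Fintype F] [Algebra (ZMod 3) F]
    (hF : Fintype.card F = 3 ^ m) :
    (Submodule.span (ZMod 3)
        {f : F → ZMod 3 | ∃ a b : F, f = fun x =>
          Algebra.trace (ZMod 3) F (a * x ^ 2) * Algebra.trace (ZMod 3) F (b * x)} :
      Set (F → ZMod 3)) =
    {f : F → ZMod 3 | ∃ c : Fin m → F, f = fun x =>
      ∑ j : Fin m, Algebra.trace (ZMod 3) F (c j * x ^ (2 * 3 ^ (j : ℕ) + 1))} := by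
  have hm1 : 1 ≤ m := by omega
  apply Set.Subset.antisymm
  · -- span ⊆ range L2
    intro f hf
    have hle : Submodule.span (ZMod 3)
        {f : F → ZMod 3 | ∃ a b : F, f = fun x =>
          Algebra.trace (ZMod 3) F (a * x ^ 2) * Algebra.trace (ZMod 3) F (b * x)} ≤
        LinearMap.range (STAux14.L2 F m) := by
      rw [Submodule.span_le]
      rintro g ⟨a, b, rfl⟩
      rw [STAux14.gen_eq_L1 hF a b, STAux14.L1_eq_L2 hm1 hF]
      exact LinearMap.mem_range_self _ _
    obtain ⟨c, hc⟩ := hle hf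
    exact ⟨c, hc.symm⟩
  · rintro f ⟨c, rfl⟩
    have : (fun x => ∑ j : Fin m,
        Algebra.trace (ZMod 3) F (c j * x ^ (2 * 3 ^ (j : ℕ) + 1))) = STAux14.L2 F m c := rfl
    rw [this, STAux14.L2_eq_L1 hm1 hF c]
    exact STAux14.L1_mem_span hm1 hF _
end

section
/- Let m ≥ 5 be odd and q = 3^m. The ternary code C₃(D_d(C(m,3))) spanned over GF(3) by the incidence vectors of the supports of the minimum-weight codewords of C(m,3) equals the GF(3)-linear span of the set of functions {Tr(a x²)Tr(b x²), Tr(a x²)Tr(b x), Tr(a x)Tr(b x), Tr(b x), 1 : a, b ∈ GF(q)}, viewed as vectors in GF(3)^q indexed by x ∈ GF(q). -/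
open Finset

variable (F : Type) [Field F] [Fintype F] [DecidableEq F] [Algebra (ZMod 3) F]
theorem myFin : Module.Finite (ZMod 3) F := Module.Finite.of_finite

theorem mySep : Algebra.IsSeparable (ZMod 3) F := by
  haveI := myFin F
  infer_instance

set_option maxHeartbeats 1000000 in
-- trace of square in span of products of linear traces
theorem trace_sq_mem_span (a : F) :
    (fun x => Algebra.trace (ZMod 3) F (a * x ^ 2)) ∈ Submodule.span (ZMod 3)
      {f : F → ZMod 3 | ∃ c d : F, f = fun x =>
        Algebra.trace (ZMod 3) F (c * x) * Algebra.trace (ZMod 3) F (d * x)} := by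
  haveI := myFin F
  haveI := mySep F
  classical
  set b := Module.finBasis (ZMod 3) F with hb
  set toD := (Algebra.traceForm (ZMod 3) F).toDual (traceForm_nondegenerate (ZMod 3) F) with htoD
  set c : Fin (Module.finrank (ZMod 3) F) → F := fun i => toD.symm (b.coord i) with hc
  have hci : ∀ i x, Algebra.trace (ZMod 3) F (c i * x) = b.repr x i := by
    intro i x
    have h1 : toD (c i) = b.coord i := toD.apply_symm_apply _
    have h2 : toD (c i) x = b.coord i x := by rw [h1]
    simpa [htoD, LinearMap.BilinForm.toDual_def, Algebra.traceForm_apply] using h2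
  have key : (fun x => Algebra.trace (ZMod 3) F (a * x ^ 2)) =
      ∑ i, ∑ j, Algebra.trace (ZMod 3) F (a * b i * b j) •
        (fun x => Algebra.trace (ZMod 3) F (c i * x) * Algebra.trace (ZMod 3) F (c j * x)) := by
    funext x
    have expand : a * x ^ 2 = ∑ i, ∑ j, (b.repr x i * b.repr x j) • (a * b i * b j) := by
      have hx : x = ∑ i, b.repr x i • b i := (b.sum_repr x).symm
      conv_lhs => rw [sq, hx]
      rw [Finset.sum_mul_sum, Finset.mul_sum]
      refine Finset.sum_congr rfl fun i _ => ?_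
      rw [Finset.mul_sum]
      refine Finset.sum_congr rfl fun j _ => ?_
      rw [smul_mul_smul_comm, mul_smul_comm, mul_assoc]
    rw [expand, map_sum]
    rw [Finset.sum_apply]
    refine Finset.sum_congr rfl fun i _ => ?_
    rw [map_sum, Finset.sum_apply]
    refine Finset.sum_congr rfl fun j _ => ?_
    rw [map_smul, Pi.smul_apply, hci, hci]
    simp [smul_eq_mul]
    ring
  rw [key]
  refine Submodule.sum_mem _ fun i _ => Submodule.sum_mem _ fun j _ => ?_
  exact Submodule.smul_mem _ _ (Submodule.subset_span ⟨c i, c j, rfl⟩)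

set_option maxHeartbeats 1000000 in
theorem forward_incl (m : ℕ) (hF : Fintype.card F = 3 ^ m) :
    Submodule.span (ZMod 3)
      {v : F → ZMod 3 | ∃ c : F → ZMod 3,
        (∃ a b : F, ∃ h : ZMod 3,
          c = fun x => Algebra.trace (ZMod 3) F (a * x ^ 2 + b * x) + h) ∧
        (Finset.univ.filter fun x : F => c x ≠ 0).card =
          2 * 3 ^ (m - 1) - 3 ^ ((m - 1) / 2) ∧
        v = fun x => if c x ≠ 0 then 1 else 0} ≤
    Submodule.span (ZMod 3)
      ({f : F → ZMod 3 | ∃ a b : F, f = fun x =>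
          Algebra.trace (ZMod 3) F (a * x ^ 2) * Algebra.trace (ZMod 3) F (b * x ^ 2)} ∪
       {f : F → ZMod 3 | ∃ a b : F, f = fun x =>
          Algebra.trace (ZMod 3) F (a * x ^ 2) * Algebra.trace (ZMod 3) F (b * x)} ∪
       {f : F → ZMod 3 | ∃ a b : F, f = fun x =>
          Algebra.trace (ZMod 3) F (a * x) * Algebra.trace (ZMod 3) F (b * x)} ∪
       {f : F → ZMod 3 | ∃ b : F, f = fun x => Algebra.trace (ZMod 3) F (b * x)} ∪
       {fun _ => 1}) := by
  rw [Submodule.span_le]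
  rintro v ⟨c, ⟨a, b, h, rfl⟩, -, rfl⟩
  set SR : Set (F → ZMod 3) :=
      ({f : F → ZMod 3 | ∃ a b : F, f = fun x =>
          Algebra.trace (ZMod 3) F (a * x ^ 2) * Algebra.trace (ZMod 3) F (b * x ^ 2)} ∪
       {f : F → ZMod 3 | ∃ a b : F, f = fun x =>
          Algebra.trace (ZMod 3) F (a * x ^ 2) * Algebra.trace (ZMod 3) F (b * x)} ∪
       {f : F → ZMod 3 | ∃ a b : F, f = fun x =>
          Algebra.trace (ZMod 3) F (a * x) * Algebra.trace (ZMod 3) F (b * x)} ∪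
       {f : F → ZMod 3 | ∃ b : F, f = fun x => Algebra.trace (ZMod 3) F (b * x)} ∪
       {fun _ => 1}) with hSR
  have hg1 : (fun x : F => Algebra.trace (ZMod 3) F (a * x ^ 2)
      * Algebra.trace (ZMod 3) F (a * x ^ 2)) ∈ SR :=
    Or.inl (Or.inl (Or.inl (Or.inl ⟨a, a, rfl⟩)))
  have hg2 : (fun x : F => Algebra.trace (ZMod 3) F (a * x ^ 2)
      * Algebra.trace (ZMod 3) F (b * x)) ∈ SR :=
    Or.inl (Or.inl (Or.inl (Or.inr ⟨a, b, rfl⟩)))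
  have hg3 : (fun x : F => Algebra.trace (ZMod 3) F (b * x)
      * Algebra.trace (ZMod 3) F (b * x)) ∈ SR :=
    Or.inl (Or.inl (Or.inr ⟨b, b, rfl⟩))
  have hg4 : (fun x : F => Algebra.trace (ZMod 3) F (b * x)) ∈ SR :=
    Or.inl (Or.inr ⟨b, rfl⟩)
  have hg5 : (fun _ : F => (1 : ZMod 3)) ∈ SR := Or.inr rfl
  have hgA : (fun x : F => Algebra.trace (ZMod 3) F (a * x ^ 2)) ∈ Submodule.span (ZMod 3) SR := by
    refine Submodule.span_mono ?_ (trace_sq_mem_span F a)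
    intro f hf
    exact Or.inl (Or.inl (Or.inr hf))
  have key : (fun x : F => if (fun x : F => Algebra.trace (ZMod 3) F (a * x ^ 2 + b * x) + h) x ≠ 0
        then (1 : ZMod 3) else 0)
      = (fun x : F => Algebra.trace (ZMod 3) F (a * x ^ 2) * Algebra.trace (ZMod 3) F (a * x ^ 2))
        + (2 : ZMod 3) • (fun x : F => Algebra.trace (ZMod 3) F (a * x ^ 2)
            * Algebra.trace (ZMod 3) F (b * x))
        + (fun x : F => Algebra.trace (ZMod 3) F (b * x) * Algebra.trace (ZMod 3) F (b * x))
        + (2 * h) • (fun x : F => Algebra.trace (ZMod 3) F (a * x ^ 2))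
        + (2 * h) • (fun x : F => Algebra.trace (ZMod 3) F (b * x))
        + (h * h) • (fun _ : F => (1 : ZMod 3)) := by
    funext x
    simp only [Pi.add_apply, Pi.smul_apply, smul_eq_mul]
    simp only [map_add]
    generalize Algebra.trace (ZMod 3) F (a * x ^ 2) = s
    generalize Algebra.trace (ZMod 3) F (b * x) = r
    revert s r h
    decide
  rw [key]
  exact add_mem (add_mem (add_mem (add_mem (add_mem
    (Submodule.subset_span hg1)
    (Submodule.smul_mem _ _ (Submodule.subset_span hg2)))
    (Submodule.subset_span hg3))
    (Submodule.smul_mem _ _ hgA))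
    (Submodule.smul_mem _ _ (Submodule.subset_span hg4)))
    (Submodule.smul_mem _ _ (Submodule.subset_span hg5))

theorem myChar : CharP F 3 := charP_of_injective_algebraMap (algebraMap (ZMod 3) F).injective 3

theorem myRingChar : ringChar F = 3 := by
  haveI := myChar F
  exact ringChar.eq F 3

theorem myRingChar2 : ringChar F ≠ 2 := by rw [myRingChar]; norm_num

/-- the counting function -/
noncomputable def NN (a : F) (u : ZMod 3) : ℕ :=
  (univ.filter fun x : F => Algebra.trace (ZMod 3) F (a * x ^ 2) = u).card

theorem NN_total (m : ℕ) (hF : Fintype.card F = 3 ^ m) (a : F) :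
    NN F a 0 + NN F a 1 + NN F a 2 = 3 ^ m := by
  classical
  have h := Finset.card_eq_sum_card_fiberwise
    (f := fun x : F => Algebra.trace (ZMod 3) F (a * x ^ 2)) (s := univ) (t := univ)
    (fun x _ => mem_univ _)
  rw [Finset.card_univ, hF] at h
  rw [show (univ : Finset (ZMod 3)) = {0, 1, 2} from by decide] at h
  rw [Finset.sum_insert (by decide), Finset.sum_insert (by decide), Finset.sum_singleton] at h
  beta_reduce at h
  rw [NN, NN, NN]
  omega

set_option maxHeartbeats 2000000 in
theorem count_main (m : ℕ) (hmodd : Odd m) (hm1 : 1 ≤ m) (hF : Fintype.card F = 3 ^ m)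
    (a : F) (ha : a ≠ 0) :
    NN F a 0 = 3 ^ (m - 1) ∧
      (NN F a 1 = 3 ^ (m - 1) + 3 ^ ((m - 1) / 2) ∧ NN F a 2 + 3 ^ ((m - 1) / 2) = 3 ^ (m - 1) ∨
       NN F a 1 + 3 ^ ((m - 1) / 2) = 3 ^ (m - 1) ∧ NN F a 2 = 3 ^ (m - 1) + 3 ^ ((m - 1) / 2)) := by
  classical
  haveI := myFin F; haveI := mySep F; haveI := myChar F
  obtain ⟨k, hk⟩ := hmodd
  -- the cube root of unity
  set ζ : ℂ := Complex.exp (2 * Real.pi * Complex.I / 3) with hζdef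
  have hζ : IsPrimitiveRoot ζ 3 := Complex.isPrimitiveRoot_exp 3 (by norm_num)
  have hζ3 : ζ ^ 3 = 1 := hζ.pow_eq_one
  have hζsum : 1 + ζ + ζ ^ 2 = 0 := by
    have := hζ.geom_sum_eq_zero (by norm_num)
    rw [Finset.sum_range_succ, Finset.sum_range_succ, Finset.sum_range_succ,
      Finset.sum_range_zero] at this
    simpa using this
  -- additive characters
  set ψ₀ : AddChar (ZMod 3) ℂ := AddChar.zmodChar 3 hζ3 with hψ₀def
  have hψ₀app : ∀ t : ZMod 3, ψ₀ t = ζ ^ t.val := fun t => rfl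
  set ψ : AddChar F ℂ := ψ₀.compAddMonoidHom (Algebra.trace (ZMod 3) F).toAddMonoidHom with hψdef
  have hψapp : ∀ x : F, ψ x = ψ₀ (Algebra.trace (ZMod 3) F x) := fun x => rfl
  have htrsurj : Function.Surjective (Algebra.trace (ZMod 3) F) :=
    Algebra.trace_surjective (ZMod 3) F
  have hζne1 : ζ ≠ 1 := hζ.ne_one (by norm_num)
  have hψne : ψ ≠ 1 := by
    obtain ⟨x, hx⟩ := htrsurj 1
    intro hcon
    have h1 : ψ x = 1 := by rw [hcon]; rfl
    rw [hψapp, hx, hψ₀app] at h1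
    rw [show ((1 : ZMod 3).val) = 1 from rfl, pow_one] at h1
    exact hζne1 h1
  have hψprim : ψ.IsPrimitive := AddChar.IsPrimitive.of_ne_one hψne
  -- the quadratic character
  set χ : MulChar F ℂ := (quadraticChar F).ringHomComp (Int.castRingHom ℂ) with hχdef
  have hχa : ∀ c : F, χ c = ((quadraticChar F c : ℤ) : ℂ) := fun c => rfl
  have hχsq : ∀ c : F, c ≠ 0 → χ c * χ c = 1 := by
    intro c hc
    rw [hχa, ← Complex.ofReal_intCast]
    rw [← Complex.ofReal_mul]
    norm_cast
    rw [← sq, quadraticChar_sq_one hc]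
  have hχne1 : χ ≠ 1 := by
    obtain ⟨c, hc⟩ := quadraticChar_exists_neg_one' (myRingChar2 F)
    intro hcon
    have h1 : χ (c : F) = 1 := by rw [hcon]; exact MulChar.one_apply_coe c
    rw [hχa, hc] at h1
    norm_num at h1
  have hχquad : χ.IsQuadratic := (quadraticChar_isQuadratic F).comp _
  have hcard4 : Fintype.card F % 4 = 3 := by
    rw [hF, hk, pow_succ, pow_mul]
    rw [Nat.mul_mod, Nat.pow_mod]
    norm_num
  have hχm1 : χ (-1) = -1 := by
    have hns : ¬ IsSquare (-1 : F) := by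
      rw [FiniteField.isSquare_neg_one_iff, hcard4]
      norm_num
    rw [hχa, quadraticChar_neg_one_iff_not_isSquare.mpr hns]
    norm_num
  set g : ℂ := gaussSum χ ψ with hgdef
  have hg2 : g ^ 2 = -(3 : ℂ) ^ m := by
    have h := gaussSum_sq hχne1 hχquad hψprim
    rw [hχm1, hF] at h
    rw [hgdef, h]
    push_cast
    ring
  -- quadratic exponential sums
  have hsq : ∀ c : F, c ≠ 0 → ∑ x : F, ψ (c * x ^ 2) = χ c * g := by
    intro c hc
    have hfib : ∑ x : F, ψ (c * x ^ 2)
        = ∑ s : F, ∑ x ∈ univ.filter (fun x : F => x ^ 2 = s), ψ (c * x ^ 2) :=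
      (Finset.sum_fiberwise_of_maps_to (fun x _ => mem_univ _) _).symm
    have hconst : ∀ s : F, ∑ x ∈ univ.filter (fun x : F => x ^ 2 = s), ψ (c * x ^ 2)
        = (((quadraticChar F s : ℤ) : ℂ) + 1) * ψ (c * s) := by
      intro s
      have h1 : ∀ x ∈ univ.filter (fun x : F => x ^ 2 = s), ψ (c * x ^ 2) = ψ (c * s) := by
        intro x hx
        rw [mem_filter] at hx
        rw [hx.2]
      rw [Finset.sum_congr rfl h1, Finset.sum_const]
      have hcards := quadraticChar_card_sqrts (myRingChar2 F) s
      have hcc : (univ.filter fun x : F => x ^ 2 = s).card = ({x : F | x ^ 2 = s}.toFinset).card := by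
        congr 1
        ext x
        simp
      rw [hcc, nsmul_eq_mul]
      congr 1
      rw [show (({x : F | x ^ 2 = s}.toFinset).card : ℂ) = (((({x : F | x ^ 2 = s}.toFinset).card : ℤ)) : ℂ) from by push_cast; ring, hcards]
      push_cast
      ring
    rw [hfib, Finset.sum_congr rfl (fun s _ => hconst s)]
    have hsplit : ∑ s : F, ((((quadraticChar F s : ℤ) : ℂ)) + 1) * ψ (c * s)
        = (∑ s : F, χ s * ψ (c * s)) + ∑ s : F, ψ (c * s) := by
      rw [← Finset.sum_add_distrib]
      refine Finset.sum_congr rfl fun s _ => ?_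
      rw [hχa]
      ring
    rw [hsplit]
    have h0 : ∑ s : F, ψ (c * s) = 0 := by
      have hne : ψ.mulShift c ≠ 1 := hψprim hc
      have := AddChar.sum_eq_zero_of_ne_one hne
      simpa [AddChar.mulShift_apply] using this
    have h2 : ∑ s : F, χ s * ψ (c * s) = χ c * g := by
      have hgs : gaussSum χ (ψ.mulShift c) = ∑ s : F, χ s * ψ (c * s) := by
        simp [gaussSum, AddChar.mulShift_apply]
      have hms := gaussSum_mulShift χ ψ (Units.mk0 c hc)
      have hms' : χ c * gaussSum χ (ψ.mulShift c) = g := by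
        simpa using hms
      have := congrArg (fun z => χ c * z) hms'.symm
      rw [← mul_assoc, hχsq c hc, one_mul] at this
      rw [← hgs, this]
    rw [h0, h2, add_zero]
  -- orthogonality on ZMod 3
  have horth : ∀ v : ZMod 3, ∑ t : ZMod 3, ψ₀ (t * v) = if v = 0 then 3 else 0 := by
    intro v
    have hexp : ∑ t : ZMod 3, ψ₀ (t * v) = ψ₀ (0 * v) + ψ₀ (1 * v) + ψ₀ (2 * v) := by
      rw [show (univ : Finset (ZMod 3)) = {0, 1, 2} from by decide,
        Finset.sum_insert (by decide), Finset.sum_insert (by decide), Finset.sum_singleton]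
      ring
    rw [hexp]
    by_cases hv : v = 0
    · subst hv
      simp only [mul_zero, AddChar.map_zero_eq_one]
      norm_num
    · have hv12 : v = 1 ∨ v = 2 := by
        have : ∀ w : ZMod 3, w ≠ 0 → w = 1 ∨ w = 2 := by decide
        exact this v hv
      rw [if_neg hv]
      rcases hv12 with rfl | rfl
      · rw [zero_mul, one_mul, AddChar.map_zero_eq_one, hψ₀app, hψ₀app]
        rw [show ((2:ZMod 3) * 1) = 2 from by decide]
        rw [show ((1 : ZMod 3).val) = 1 from rfl, show ((2 : ZMod 3).val) = 2 from rfl]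
        rw [pow_one]
        linear_combination hζsum
      · rw [zero_mul, one_mul, AddChar.map_zero_eq_one, hψ₀app, hψ₀app]
        rw [show ((2:ZMod 3) * 2) = 1 from by decide]
        rw [show ((1 : ZMod 3).val) = 1 from rfl, show ((2 : ZMod 3).val) = 2 from rfl]
        rw [pow_one]
        linear_combination hζsum
  -- reduce m
  obtain ⟨n, rfl⟩ : ∃ n, m = n + 1 := ⟨m - 1, by omega⟩
  simp only [Nat.add_sub_cancel] at *
  -- main identity
  have hmain : ∀ u : ZMod 3, (3 : ℂ) * (NN F a u : ℂ)
      = 3 ^ (n + 1) + χ a * g * (ψ₀ (-u) - ψ₀ u) := by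
    intro u
    have step1 : (3 : ℂ) * (NN F a u : ℂ)
        = ∑ x : F, (if Algebra.trace (ZMod 3) F (a * x ^ 2) = u then (3 : ℂ) else 0) := by
      have hNNdef : NN F a u
          = (univ.filter fun x : F => Algebra.trace (ZMod 3) F (a * x ^ 2) = u).card := rfl
      rw [Finset.sum_ite, Finset.sum_const, Finset.sum_const, hNNdef, nsmul_eq_mul, nsmul_eq_mul]
      push_cast
      ring
    have step2 : ∀ x : F, (if Algebra.trace (ZMod 3) F (a * x ^ 2) = u then (3 : ℂ) else 0)
        = ∑ t : ZMod 3, ψ₀ (t * (Algebra.trace (ZMod 3) F (a * x ^ 2) - u)) := by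
      intro x
      rw [horth]
      by_cases hc : Algebra.trace (ZMod 3) F (a * x ^ 2) = u
      · rw [if_pos hc, if_pos (by rw [hc, sub_self])]
      · rw [if_neg hc, if_neg (fun hh => hc (sub_eq_zero.mp hh))]
    rw [step1, Finset.sum_congr rfl (fun x _ => step2 x), Finset.sum_comm]
    rw [show (univ : Finset (ZMod 3)) = {0, 1, 2} from by decide,
      Finset.sum_insert (by decide), Finset.sum_insert (by decide), Finset.sum_singleton]
    have hsplitψ : ∀ (t : ZMod 3) (x : F), ψ₀ (t * (Algebra.trace (ZMod 3) F (a * x ^ 2) - u))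
        = ψ₀ (t * Algebra.trace (ZMod 3) F (a * x ^ 2)) * ψ₀ (-(t * u)) := by
      intro t x
      rw [← ψ₀.map_add_eq_mul]
      congr 1
      ring
    have htr : ∀ (t : ZMod 3) (x : F), ψ₀ (t * Algebra.trace (ZMod 3) F (a * x ^ 2))
        = ψ (algebraMap (ZMod 3) F t * a * x ^ 2) := by
      intro t x
      rw [hψapp]
      have hh : algebraMap (ZMod 3) F t * a * x ^ 2 = t • (a * x ^ 2) := by
        rw [Algebra.smul_def, mul_assoc]
      rw [hh, map_smul, smul_eq_mul]
    have ht0 : ∑ x : F, ψ₀ (0 * (Algebra.trace (ZMod 3) F (a * x ^ 2) - u)) = (3 : ℂ) ^ (n+1) := by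
      have e0 : ∀ x : F, ψ₀ (0 * (Algebra.trace (ZMod 3) F (a * x ^ 2) - u)) = 1 := by
        intro x
        rw [zero_mul, AddChar.map_zero_eq_one]
      rw [Finset.sum_congr rfl fun x _ => e0 x, Finset.sum_const, Finset.card_univ, hF,
        nsmul_eq_mul, mul_one]
      push_cast
      ring
    have ht1 : ∑ x : F, ψ₀ (1 * (Algebra.trace (ZMod 3) F (a * x ^ 2) - u))
        = χ a * g * ψ₀ (-u) := by
      have e1 : ∀ x : F, ψ₀ (1 * (Algebra.trace (ZMod 3) F (a * x ^ 2) - u))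
          = ψ (a * x ^ 2) * ψ₀ (-u) := by
        intro x
        rw [hsplitψ 1 x, htr 1 x, map_one, one_mul, one_mul]
      rw [Finset.sum_congr rfl fun x _ => e1 x, ← Finset.sum_mul, hsq a ha]
    have h2a : algebraMap (ZMod 3) F 2 * a = -a := by
      rw [show (2 : ZMod 3) = -1 from by decide, map_neg, map_one]
      ring
    have h2u : -((2 : ZMod 3) * u) = u := by
      have : ∀ w : ZMod 3, -(2 * w) = w := by decide
      exact this u
    have ht2 : ∑ x : F, ψ₀ (2 * (Algebra.trace (ZMod 3) F (a * x ^ 2) - u))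
        = -(χ a * g) * ψ₀ u := by
      have e2 : ∀ x : F, ψ₀ (2 * (Algebra.trace (ZMod 3) F (a * x ^ 2) - u))
          = ψ (-a * x ^ 2) * ψ₀ u := by
        intro x
        rw [hsplitψ 2 x, htr 2 x, h2a, h2u]
      rw [Finset.sum_congr rfl fun x _ => e2 x, ← Finset.sum_mul,
        hsq (-a) (neg_ne_zero.mpr ha)]
      rw [show (-a : F) = -1 * a from by ring, map_mul, hχm1]
      ring
    rw [ht0, ht1, ht2]
    ring
  -- extract N 0
  have hps : (3 : ℂ) ^ (n + 1) = 3 * 3 ^ n := by rw [pow_succ]; ring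
  have hN0 : NN F a 0 = 3 ^ n := by
    have h := hmain 0
    rw [neg_zero, sub_self, mul_zero, add_zero, hps] at h
    have h' := mul_left_cancel₀ (by norm_num : (3 : ℂ) ≠ 0) h
    exact_mod_cast h'
  have hsum12 : (NN F a 1 : ℤ) + (NN F a 2 : ℤ) = 2 * 3 ^ n := by
    have ht := NN_total F (n + 1) hF a
    have ht' : (NN F a 0 : ℤ) + NN F a 1 + NN F a 2 = 3 ^ (n + 1) := by exact_mod_cast ht
    have hN0' : (NN F a 0 : ℤ) = 3 ^ n := by exact_mod_cast hN0
    have hps' : (3 : ℤ) ^ (n + 1) = 3 ^ n * 3 := pow_succ 3 n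
    linarith
  -- extract the difference
  have hdiff : ((NN F a 1 : ℤ) - (NN F a 2 : ℤ)) ^ 2 = 4 * 3 ^ n := by
    have h1 := hmain 1
    have h2 := hmain 2
    rw [show -(1 : ZMod 3) = 2 from by decide] at h1
    rw [show -(2 : ZMod 3) = 1 from by decide] at h2
    have hD : (3 : ℂ) * ((NN F a 1 : ℂ) - (NN F a 2 : ℂ))
        = χ a * g * (2 * (ψ₀ 2 - ψ₀ 1)) := by
      linear_combination h1 - h2
    have hsq9 : (9 : ℂ) * ((NN F a 1 : ℂ) - (NN F a 2 : ℂ)) ^ 2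
        = (χ a * χ a) * g ^ 2 * (4 * (ψ₀ 2 - ψ₀ 1) ^ 2) := by
      linear_combination ((3 : ℂ) * ((NN F a 1 : ℂ) - (NN F a 2 : ℂ))
        + χ a * g * (2 * (ψ₀ 2 - ψ₀ 1))) * hD
    have hzz : (ψ₀ 2 - ψ₀ 1) ^ 2 = -3 := by
      rw [hψ₀app, hψ₀app, show ((2 : ZMod 3).val) = 2 from rfl,
        show ((1 : ZMod 3).val) = 1 from rfl, pow_one]
      linear_combination (ζ - 2) * hζ3 + hζsum
    rw [hχsq a ha, hg2, hzz, one_mul] at hsq9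
    have hfin : (9 : ℂ) * ((NN F a 1 : ℂ) - (NN F a 2 : ℂ)) ^ 2 = 36 * 3 ^ n := by
      rw [hsq9, hps]
      ring
    have hint : (9 : ℤ) * ((NN F a 1 : ℤ) - (NN F a 2 : ℤ)) ^ 2 = 36 * 3 ^ n := by
      have hc : (((9 : ℤ) * ((NN F a 1 : ℤ) - (NN F a 2 : ℤ)) ^ 2 : ℤ) : ℂ)
          = ((36 * 3 ^ n : ℤ) : ℂ) := by
        push_cast
        linear_combination hfin
      exact_mod_cast hc
    nlinarith [hint]
  have hE : ((3 : ℤ) ^ (n / 2)) ^ 2 = 3 ^ n := by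
    rw [← pow_mul]
    congr 1
    omega
  have hfactor : ((NN F a 1 : ℤ) - (NN F a 2 : ℤ) - 2 * 3 ^ (n / 2)) *
      ((NN F a 1 : ℤ) - (NN F a 2 : ℤ) + 2 * 3 ^ (n / 2)) = 0 := by
    linear_combination hdiff - 4 * hE
  refine ⟨hN0, ?_⟩
  rcases mul_eq_zero.mp hfactor with h | h
  · left
    constructor
    · have : (NN F a 1 : ℤ) = 3 ^ n + 3 ^ (n / 2) := by linarith
      exact_mod_cast this
    · have : (NN F a 2 : ℤ) + 3 ^ (n / 2) = 3 ^ n := by linarith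
      exact_mod_cast this
  · right
    constructor
    · have : (NN F a 1 : ℤ) + 3 ^ (n / 2) = 3 ^ n := by linarith
      exact_mod_cast this
    · have : (NN F a 2 : ℤ) = 3 ^ n + 3 ^ (n / 2) := by linarith
      exact_mod_cast this

set_option maxHeartbeats 4000000 in
theorem reverse_incl (m : ℕ) (hm : 5 ≤ m) (hmodd : Odd m) (hF : Fintype.card F = 3 ^ m) :
    Submodule.span (ZMod 3)
      ({f : F → ZMod 3 | ∃ a b : F, f = fun x =>
          Algebra.trace (ZMod 3) F (a * x ^ 2) * Algebra.trace (ZMod 3) F (b * x ^ 2)} ∪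
       {f : F → ZMod 3 | ∃ a b : F, f = fun x =>
          Algebra.trace (ZMod 3) F (a * x ^ 2) * Algebra.trace (ZMod 3) F (b * x)} ∪
       {f : F → ZMod 3 | ∃ a b : F, f = fun x =>
          Algebra.trace (ZMod 3) F (a * x) * Algebra.trace (ZMod 3) F (b * x)} ∪
       {f : F → ZMod 3 | ∃ b : F, f = fun x => Algebra.trace (ZMod 3) F (b * x)} ∪
       {fun _ => 1}) ≤
    Submodule.span (ZMod 3)
      {v : F → ZMod 3 | ∃ c : F → ZMod 3,
        (∃ a b : F, ∃ h : ZMod 3,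
          c = fun x => Algebra.trace (ZMod 3) F (a * x ^ 2 + b * x) + h) ∧
        (Finset.univ.filter fun x : F => c x ≠ 0).card =
          2 * 3 ^ (m - 1) - 3 ^ ((m - 1) / 2) ∧
        v = fun x => if c x ≠ 0 then 1 else 0} := by
  haveI := myChar F
  have h3F : (3 : F) = 0 := by exact_mod_cast CharP.cast_eq_zero F 3
  set SL : Set (F → ZMod 3) :=
      {v : F → ZMod 3 | ∃ c : F → ZMod 3,
        (∃ a b : F, ∃ h : ZMod 3,
          c = fun x => Algebra.trace (ZMod 3) F (a * x ^ 2 + b * x) + h) ∧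
        (Finset.univ.filter fun x : F => c x ≠ 0).card =
          2 * 3 ^ (m - 1) - 3 ^ ((m - 1) / 2) ∧
        v = fun x => if c x ≠ 0 then 1 else 0} with hSL
  rw [Submodule.span_le]
  obtain ⟨P, hP⟩ : ∃ P : ℕ, P = 3 ^ (m - 1) := ⟨_, rfl⟩
  obtain ⟨E, hE⟩ : ∃ E : ℕ, E = 3 ^ ((m - 1) / 2) := ⟨_, rfl⟩
  have hEP : 0 < E ∧ E < P := by
    constructor
    · rw [hE]; positivity
    · rw [hE, hP]; exact Nat.pow_lt_pow_right (by norm_num) (by omega)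
  have h3P : 3 ^ m = 3 * P := by
    rw [hP, ← pow_succ']
    congr 1
    omega
  have hcm : ∀ a : F, a ≠ 0 → NN F a 0 = P ∧
      (NN F a 1 = P + E ∧ NN F a 2 + E = P ∨ NN F a 1 + E = P ∧ NN F a 2 = P + E) := by
    intro a ha
    rw [hP, hE]
    exact count_main F m hmodd (by omega) hF a ha
  have hNpos : ∀ a : F, a ≠ 0 → ∀ v : ZMod 3, 0 < NN F a v := by
    intro a ha v
    obtain ⟨h0, h12⟩ := hcm a ha
    have hv : v = 0 ∨ v = 1 ∨ v = 2 := by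
      have h' : ∀ u : ZMod 3, u = 0 ∨ u = 1 ∨ u = 2 := by decide
      exact h' v
    obtain ⟨hE1, hE2⟩ := hEP
    rcases hv with rfl | rfl | rfl <;> rcases h12 with ⟨ha1, ha2⟩ | ⟨ha1, ha2⟩ <;> omega
  have hNsurj : ∀ a : F, a ≠ 0 → ∀ v : ZMod 3,
      ∃ b : F, Algebra.trace (ZMod 3) F (b ^ 2 / a) = v := by
    intro a ha v
    have hpos : 0 < (univ.filter fun x : F =>
        Algebra.trace (ZMod 3) F (a⁻¹ * x ^ 2) = v).card := hNpos a⁻¹ (inv_ne_zero ha) v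
    obtain ⟨x, hx⟩ := Finset.card_pos.mp hpos
    rw [Finset.mem_filter] at hx
    refine ⟨x, ?_⟩
    rw [div_eq_mul_inv, mul_comm]
    exact hx.2
  have hwsel : ∀ a : F, ∃ u : ZMod 3, a ≠ 0 → NN F a u = P + E := by
    intro a
    by_cases ha : a = 0
    · exact ⟨0, fun h => absurd ha h⟩
    · obtain ⟨h0, h12⟩ := hcm a ha
      rcases h12 with ⟨h1, _⟩ | ⟨_, h2⟩
      · exact ⟨1, fun _ => h1⟩
      · exact ⟨2, fun _ => h2⟩
  choose w hw using hwsel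
  -- membership of squares of minimum-weight codewords
  have hmem : ∀ a b : F, a ≠ 0 →
      (fun x : F => (Algebra.trace (ZMod 3) F (a * x ^ 2) + Algebra.trace (ZMod 3) F (b * x)
        + (Algebra.trace (ZMod 3) F (b ^ 2 / a) - w a)) ^ 2) ∈ Submodule.span (ZMod 3) SL := by
    intro a b ha
    apply Submodule.subset_span
    refine ⟨fun x => Algebra.trace (ZMod 3) F (a * x ^ 2 + b * x)
      + (Algebra.trace (ZMod 3) F (b ^ 2 / a) - w a),
      ⟨a, b, Algebra.trace (ZMod 3) F (b ^ 2 / a) - w a, rfl⟩, ?_, ?_⟩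
    · -- the weight is the minimum weight
      obtain ⟨t, ht⟩ : ∃ t : F, t = b / a := ⟨_, rfl⟩
      have hb : b = a * t := by rw [ht]; field_simp
      have hba : b ^ 2 / a = a * t ^ 2 := by
        rw [hb]
        field_simp
      have hfield : ∀ x : F, a * x ^ 2 + b * x + b ^ 2 / a = a * (x - t) ^ 2 := by
        intro x
        rw [hba]
        nth_rewrite 1 [hb]
        linear_combination a * t * x * h3F
      have hpred : ∀ x : F, ((Algebra.trace (ZMod 3) F (a * x ^ 2 + b * x)
          + (Algebra.trace (ZMod 3) F (b ^ 2 / a) - w a)) ≠ 0)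
          ↔ ¬ (Algebra.trace (ZMod 3) F (a * (x - t) ^ 2) = w a) := by
        intro x
        have htreq : Algebra.trace (ZMod 3) F (a * (x - t) ^ 2)
            = Algebra.trace (ZMod 3) F (a * x ^ 2 + b * x)
              + Algebra.trace (ZMod 3) F (b ^ 2 / a) := by
          rw [← map_add]
          congr 1
          rw [hfield]
        rw [show Algebra.trace (ZMod 3) F (a * x ^ 2 + b * x)
            + (Algebra.trace (ZMod 3) F (b ^ 2 / a) - w a)
            = (Algebra.trace (ZMod 3) F (a * x ^ 2 + b * x)
              + Algebra.trace (ZMod 3) F (b ^ 2 / a)) - w a from by ring, sub_ne_zero, htreq]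
      have hfeq : (Finset.univ.filter fun x : F =>
            (fun x : F => Algebra.trace (ZMod 3) F (a * x ^ 2 + b * x)
              + (Algebra.trace (ZMod 3) F (b ^ 2 / a) - w a)) x ≠ 0)
          = Finset.univ.filter fun x : F =>
            ¬ (Algebra.trace (ZMod 3) F (a * (x - t) ^ 2) = w a) := by
        ext x
        simp only [Finset.mem_filter, Finset.mem_univ, true_and]
        exact hpred x
      rw [hfeq]
      have hcard1 : (univ.filter fun x : F =>
            ¬ (Algebra.trace (ZMod 3) F (a * (x - t) ^ 2) = w a)).card
          = (univ.filter fun y : F =>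
            ¬ (Algebra.trace (ZMod 3) F (a * y ^ 2) = w a)).card := by
        apply Finset.card_bij (fun x _ => x - t)
        · intro x hx
          rw [mem_filter] at hx ⊢
          exact ⟨mem_univ _, hx.2⟩
        · intro x hx y hy hxy
          exact sub_left_injective hxy
        · intro y hy
          refine ⟨y + t, ?_, by ring⟩
          rw [mem_filter] at hy ⊢
          refine ⟨mem_univ _, ?_⟩
          rw [add_sub_cancel_right]
          exact hy.2
      rw [hcard1]
      have hcard2 : (univ.filter fun y : F =>
            ¬ (Algebra.trace (ZMod 3) F (a * y ^ 2) = w a)).card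
          = 3 ^ m - NN F a (w a) := by
        rw [Finset.filter_not, Finset.card_sdiff_of_subset (Finset.filter_subset _ _),
          Finset.card_univ, hF]
        rfl
      rw [hcard2, hw a ha, ← hP, ← hE, h3P]
      obtain ⟨hE1, hE2⟩ := hEP
      omega
    · -- the incidence vector is the square
      funext x
      beta_reduce
      simp only [map_add]
      generalize Algebra.trace (ZMod 3) F (a * x ^ 2)
        + Algebra.trace (ZMod 3) F (b * x)
        + (Algebra.trace (ZMod 3) F (b ^ 2 / a) - w a) = q
      revert q
      decide
  
  -- B_b^2 memberships
  have hB2 : ∀ b : F, (fun x : F => Algebra.trace (ZMod 3) F (b * x)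
      * Algebra.trace (ZMod 3) F (b * x)) ∈ Submodule.span (ZMod 3) SL := by
    intro b
    by_cases hb : b = 0
    · subst hb
      have hz : (fun x : F => Algebra.trace (ZMod 3) F ((0 : F) * x)
          * Algebra.trace (ZMod 3) F ((0 : F) * x)) = (0 : F → ZMod 3) := by
        funext x
        simp
      rw [hz]
      exact Submodule.zero_mem _
    · obtain ⟨a, ha, hTa⟩ : ∃ a : F, a ≠ 0 ∧ Algebra.trace (ZMod 3) F (b ^ 2 / a) = 0 := by
        obtain ⟨c₁, c₂, hne, hcc⟩ := Fintype.exists_ne_map_eq_of_card_lt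
          (fun c : F => Algebra.trace (ZMod 3) F (b ^ 2 * c)) (by
            rw [hF]
            have hcard3 : Fintype.card (ZMod 3) = 3 := by simp
            rw [hcard3]
            calc 3 = 3 ^ 1 := (pow_one 3).symm
            _ < 3 ^ m := Nat.pow_lt_pow_right (by norm_num) (by omega))
        have hcc' : Algebra.trace (ZMod 3) F (b ^ 2 * c₁)
            = Algebra.trace (ZMod 3) F (b ^ 2 * c₂) := hcc
        refine ⟨(c₁ - c₂)⁻¹, inv_ne_zero (sub_ne_zero.mpr hne), ?_⟩
        rw [div_eq_mul_inv, inv_inv, mul_sub, map_sub, hcc', sub_self]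
      have m1 := hmem a b ha
      have m2 := hmem a (-b) ha
      have m3 := hmem a 0 ha
      have key : (fun x : F => Algebra.trace (ZMod 3) F (b * x)
            * Algebra.trace (ZMod 3) F (b * x))
          = (2 : ZMod 3) • (fun x : F => (Algebra.trace (ZMod 3) F (a * x ^ 2)
              + Algebra.trace (ZMod 3) F (b * x)
              + (Algebra.trace (ZMod 3) F (b ^ 2 / a) - w a)) ^ 2)
          + (2 : ZMod 3) • (fun x : F => (Algebra.trace (ZMod 3) F (a * x ^ 2)
              + Algebra.trace (ZMod 3) F ((-b) * x)
              + (Algebra.trace (ZMod 3) F ((-b) ^ 2 / a) - w a)) ^ 2)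
          + (2 : ZMod 3) • (fun x : F => (Algebra.trace (ZMod 3) F (a * x ^ 2)
              + Algebra.trace (ZMod 3) F ((0 : F) * x)
              + (Algebra.trace (ZMod 3) F ((0 : F) ^ 2 / a) - w a)) ^ 2) := by
        funext x
        have e1 : (-b) * x = -(b * x) := by ring
        have e2 : ((-b) : F) ^ 2 = b ^ 2 := by ring
        have e3 : (0 : F) * x = 0 := by ring
        have e4 : ((0 : F)) ^ 2 / a = 0 := by
          rw [zero_pow (by norm_num : (2 : ℕ) ≠ 0), zero_div]
        simp only [Pi.add_apply, Pi.smul_apply, smul_eq_mul, e1, e2, e3, e4,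
          map_neg, map_zero, hTa]
        generalize Algebra.trace (ZMod 3) F (a * x ^ 2) = s
        generalize Algebra.trace (ZMod 3) F (b * x) = r
        generalize w a = W
        revert s r W
        decide
      rw [key]
      exact add_mem (add_mem (Submodule.smul_mem _ _ m1) (Submodule.smul_mem _ _ m2))
        (Submodule.smul_mem _ _ m3)
  -- (A + k)^2 memberships
  have hAk : ∀ a : F, a ≠ 0 → ∀ k : ZMod 3,
      (fun x : F => (Algebra.trace (ZMod 3) F (a * x ^ 2) + k) ^ 2)
        ∈ Submodule.span (ZMod 3) SL := by
    intro a ha k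
    obtain ⟨b, hTb⟩ := hNsurj a ha (k + w a)
    have m1 := hmem a b ha
    have m2 := hmem a (-b) ha
    have m3 := hB2 b
    have key : (fun x : F => (Algebra.trace (ZMod 3) F (a * x ^ 2) + k) ^ 2)
        = (2 : ZMod 3) • (fun x : F => (Algebra.trace (ZMod 3) F (a * x ^ 2)
            + Algebra.trace (ZMod 3) F (b * x)
            + (Algebra.trace (ZMod 3) F (b ^ 2 / a) - w a)) ^ 2)
        + (2 : ZMod 3) • (fun x : F => (Algebra.trace (ZMod 3) F (a * x ^ 2)
            + Algebra.trace (ZMod 3) F ((-b) * x)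
            + (Algebra.trace (ZMod 3) F ((-b) ^ 2 / a) - w a)) ^ 2)
        + (2 : ZMod 3) • (fun x : F => Algebra.trace (ZMod 3) F (b * x)
            * Algebra.trace (ZMod 3) F (b * x)) := by
      funext x
      have e1 : (-b) * x = -(b * x) := by ring
      have e2 : ((-b) : F) ^ 2 = b ^ 2 := by ring
      simp only [Pi.add_apply, Pi.smul_apply, smul_eq_mul, e1, e2, map_neg, hTb]
      clear hTb m1 m2 m3
      generalize Algebra.trace (ZMod 3) F (a * x ^ 2) = s
      generalize Algebra.trace (ZMod 3) F (b * x) = r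
      generalize w a = W
      revert s r W k
      decide
    rw [key]
    exact add_mem (add_mem (Submodule.smul_mem _ _ m1) (Submodule.smul_mem _ _ m2))
      (Submodule.smul_mem _ _ m3)
  -- A memberships
  have hA : ∀ a : F, (fun x : F => Algebra.trace (ZMod 3) F (a * x ^ 2))
      ∈ Submodule.span (ZMod 3) SL := by
    intro a
    by_cases ha : a = 0
    · subst ha
      have hz : (fun x : F => Algebra.trace (ZMod 3) F ((0 : F) * x ^ 2)) = (0 : F → ZMod 3) := by
        funext x
        simp
      rw [hz]
      exact Submodule.zero_mem _
    · have k1 := hAk a ha 1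
      have k2 := hAk a ha 2
      have key : (fun x : F => Algebra.trace (ZMod 3) F (a * x ^ 2))
          = ((fun x : F => (Algebra.trace (ZMod 3) F (a * x ^ 2) + 1) ^ 2) : F → ZMod 3)
          + (2 : ZMod 3) • ((fun x : F => (Algebra.trace (ZMod 3) F (a * x ^ 2) + 2) ^ 2) : F → ZMod 3) := by
        funext x
        simp only [Pi.add_apply, Pi.smul_apply, smul_eq_mul]
        generalize Algebra.trace (ZMod 3) F (a * x ^ 2) = s
        revert s
        decide
      rw [key]
      exact add_mem k1 (Submodule.smul_mem _ _ k2)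
  -- the constant function 1
  have hone : (fun _ : F => (1 : ZMod 3)) ∈ Submodule.span (ZMod 3) SL := by
    have k0 := hAk 1 one_ne_zero 0
    have k1 := hAk 1 one_ne_zero 1
    have k2 := hAk 1 one_ne_zero 2
    have key : (fun _ : F => (1 : ZMod 3))
        = (2 : ZMod 3) • ((fun x : F => (Algebra.trace (ZMod 3) F (1 * x ^ 2) + 0) ^ 2) : F → ZMod 3)
        + (2 : ZMod 3) • ((fun x : F => (Algebra.trace (ZMod 3) F (1 * x ^ 2) + 1) ^ 2) : F → ZMod 3)
        + (2 : ZMod 3) • ((fun x : F => (Algebra.trace (ZMod 3) F (1 * x ^ 2) + 2) ^ 2) : F → ZMod 3) := by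
      funext x
      simp only [Pi.add_apply, Pi.smul_apply, smul_eq_mul]
      generalize Algebra.trace (ZMod 3) F (1 * x ^ 2) = s
      revert s
      decide
    rw [key]
    exact add_mem (add_mem (Submodule.smul_mem _ _ k0) (Submodule.smul_mem _ _ k1))
      (Submodule.smul_mem _ _ k2)
  -- A * A memberships
  have hAsq : ∀ a : F, (fun x : F => Algebra.trace (ZMod 3) F (a * x ^ 2)
      * Algebra.trace (ZMod 3) F (a * x ^ 2)) ∈ Submodule.span (ZMod 3) SL := by
    intro a
    by_cases ha : a = 0
    · subst ha
      have hz : (fun x : F => Algebra.trace (ZMod 3) F ((0 : F) * x ^ 2)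
          * Algebra.trace (ZMod 3) F ((0 : F) * x ^ 2)) = (0 : F → ZMod 3) := by
        funext x
        simp
      rw [hz]
      exact Submodule.zero_mem _
    · have k0 := hAk a ha 0
      have key : (fun x : F => Algebra.trace (ZMod 3) F (a * x ^ 2)
            * Algebra.trace (ZMod 3) F (a * x ^ 2))
          = (fun x : F => (Algebra.trace (ZMod 3) F (a * x ^ 2) + 0) ^ 2) := by
        funext x
        generalize Algebra.trace (ZMod 3) F (a * x ^ 2) = s
        revert s
        decide
      rw [key]
      exact k0
  -- type 1 generators
  have hA2 : ∀ a c : F, (fun x : F => Algebra.trace (ZMod 3) F (a * x ^ 2)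
      * Algebra.trace (ZMod 3) F (c * x ^ 2)) ∈ Submodule.span (ZMod 3) SL := by
    intro a c
    have k1 := hAsq (a + c)
    have k2 := hAsq a
    have k3 := hAsq c
    have key : (fun x : F => Algebra.trace (ZMod 3) F (a * x ^ 2)
          * Algebra.trace (ZMod 3) F (c * x ^ 2))
        = (2 : ZMod 3) • (fun x : F => Algebra.trace (ZMod 3) F ((a + c) * x ^ 2)
            * Algebra.trace (ZMod 3) F ((a + c) * x ^ 2))
        + (fun x : F => Algebra.trace (ZMod 3) F (a * x ^ 2)
            * Algebra.trace (ZMod 3) F (a * x ^ 2))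
        + (fun x : F => Algebra.trace (ZMod 3) F (c * x ^ 2)
            * Algebra.trace (ZMod 3) F (c * x ^ 2)) := by
      funext x
      have e1 : (a + c) * x ^ 2 = a * x ^ 2 + c * x ^ 2 := by ring
      simp only [Pi.add_apply, Pi.smul_apply, smul_eq_mul, e1, map_add]
      generalize Algebra.trace (ZMod 3) F (a * x ^ 2) = s
      generalize Algebra.trace (ZMod 3) F (c * x ^ 2) = u
      revert s u
      decide
    rw [key]
    exact add_mem (add_mem (Submodule.smul_mem _ _ k1) k2) k3
  -- type 3 generators
  have hBB : ∀ b c : F, (fun x : F => Algebra.trace (ZMod 3) F (b * x)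
      * Algebra.trace (ZMod 3) F (c * x)) ∈ Submodule.span (ZMod 3) SL := by
    intro b c
    have k1 := hB2 (b + c)
    have k2 := hB2 b
    have k3 := hB2 c
    have key : (fun x : F => Algebra.trace (ZMod 3) F (b * x)
          * Algebra.trace (ZMod 3) F (c * x))
        = (2 : ZMod 3) • (fun x : F => Algebra.trace (ZMod 3) F ((b + c) * x)
            * Algebra.trace (ZMod 3) F ((b + c) * x))
        + (fun x : F => Algebra.trace (ZMod 3) F (b * x)
            * Algebra.trace (ZMod 3) F (b * x))
        + (fun x : F => Algebra.trace (ZMod 3) F (c * x)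
            * Algebra.trace (ZMod 3) F (c * x)) := by
      funext x
      have e1 : (b + c) * x = b * x + c * x := by ring
      simp only [Pi.add_apply, Pi.smul_apply, smul_eq_mul, e1, map_add]
      generalize Algebra.trace (ZMod 3) F (b * x) = s
      generalize Algebra.trace (ZMod 3) F (c * x) = u
      revert s u
      decide
    rw [key]
    exact add_mem (add_mem (Submodule.smul_mem _ _ k1) k2) k3
  -- the Y functions
  have hY : ∀ a : F, a ≠ 0 → ∀ b : F,
      (fun x : F => Algebra.trace (ZMod 3) F (a * x ^ 2) * Algebra.trace (ZMod 3) F (b * x)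
        + (Algebra.trace (ZMod 3) F (b ^ 2 / a) - w a) * Algebra.trace (ZMod 3) F (b * x))
        ∈ Submodule.span (ZMod 3) SL := by
    intro a ha b
    have m1 := hmem a b ha
    have m2 := hmem a (-b) ha
    have key : (fun x : F => Algebra.trace (ZMod 3) F (a * x ^ 2)
          * Algebra.trace (ZMod 3) F (b * x)
          + (Algebra.trace (ZMod 3) F (b ^ 2 / a) - w a) * Algebra.trace (ZMod 3) F (b * x))
        = (fun x : F => (Algebra.trace (ZMod 3) F (a * x ^ 2)
            + Algebra.trace (ZMod 3) F (b * x)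
            + (Algebra.trace (ZMod 3) F (b ^ 2 / a) - w a)) ^ 2)
        + (2 : ZMod 3) • (fun x : F => (Algebra.trace (ZMod 3) F (a * x ^ 2)
            + Algebra.trace (ZMod 3) F ((-b) * x)
            + (Algebra.trace (ZMod 3) F ((-b) ^ 2 / a) - w a)) ^ 2) := by
      funext x
      have e1 : (-b) * x = -(b * x) := by ring
      have e2 : ((-b) : F) ^ 2 = b ^ 2 := by ring
      simp only [Pi.add_apply, Pi.smul_apply, smul_eq_mul, e1, e2, map_neg]
      generalize Algebra.trace (ZMod 3) F (a * x ^ 2) = s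
      generalize Algebra.trace (ZMod 3) F (b * x) = r
      generalize Algebra.trace (ZMod 3) F (b ^ 2 / a) = T
      generalize w a = W
      revert s r T W
      decide
    rw [key]
    exact add_mem m1 (Submodule.smul_mem _ _ m2)
  -- type 4 generators
  have hBlin : ∀ b : F, (fun x : F => Algebra.trace (ZMod 3) F (b * x))
      ∈ Submodule.span (ZMod 3) SL := by
    intro b
    by_cases hb : b = 0
    · subst hb
      have hz : (fun x : F => Algebra.trace (ZMod 3) F ((0 : F) * x)) = (0 : F → ZMod 3) := by
        funext x
        simp
      rw [hz]
      exact Submodule.zero_mem _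
    · obtain ⟨w₀, hw₀ne, hbw₀⟩ : ∃ w₀ : F, w₀ ≠ 0 ∧ Algebra.trace (ZMod 3) F (b * w₀) = 0 := by
        obtain ⟨c₁, c₂, hne, hcc⟩ := Fintype.exists_ne_map_eq_of_card_lt
          (fun c : F => Algebra.trace (ZMod 3) F (b * c)) (by
            rw [hF]
            have hcard3 : Fintype.card (ZMod 3) = 3 := by simp
            rw [hcard3]
            calc 3 = 3 ^ 1 := (pow_one 3).symm
            _ < 3 ^ m := Nat.pow_lt_pow_right (by norm_num) (by omega))
        have hcc' : Algebra.trace (ZMod 3) F (b * c₁) = Algebra.trace (ZMod 3) F (b * c₂) := hcc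
        exact ⟨c₁ - c₂, sub_ne_zero.mpr hne, by rw [mul_sub, map_sub, hcc', sub_self]⟩
      obtain ⟨x₀, hx₀⟩ := Finset.card_pos.mp (hNpos w₀ hw₀ne 1)
      rw [Finset.mem_filter] at hx₀
      obtain ⟨b₂, hb₂⟩ : ∃ b₂ : F, Algebra.trace (ZMod 3) F (b₂ * w₀) = 1 :=
        ⟨x₀ ^ 2, by rw [mul_comm]; exact hx₀.2⟩
      have hbne : b - b₂ ≠ 0 := by
        intro hcon
        rw [sub_eq_zero] at hcon
        rw [← hcon] at hb₂
        rw [hbw₀] at hb₂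
        exact zero_ne_one hb₂
      obtain ⟨a, haeq⟩ : ∃ a : F, a = (b - b₂) / w₀ := ⟨_, rfl⟩
      have ha : a ≠ 0 := by
        rw [haeq]
        exact div_ne_zero hbne hw₀ne
      have hdiv : (b - b₂) / a = w₀ := by
        rw [haeq]
        field_simp
      have hqq1 : b ^ 2 / a = (b + b₂) ^ 2 / a + b₂ * w₀ - 3 * (b * b₂ / a) := by
        rw [← hdiv]
        field_simp
        ring
      have hqq2 : b₂ ^ 2 / a = (b + b₂) ^ 2 / a - b * w₀ - 3 * (b * b₂ / a) := by
        rw [← hdiv]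
        field_simp
        ring
      have hT13 : Algebra.trace (ZMod 3) F (b ^ 2 / a)
          = Algebra.trace (ZMod 3) F ((b + b₂) ^ 2 / a) + 1 := by
        rw [hqq1, h3F, zero_mul, sub_zero, map_add, hb₂]
      have hT23 : Algebra.trace (ZMod 3) F (b₂ ^ 2 / a)
          = Algebra.trace (ZMod 3) F ((b + b₂) ^ 2 / a) := by
        rw [hqq2, h3F, zero_mul, sub_zero, map_sub, hbw₀, sub_zero]
      have m1 := hY a ha b
      have m2 := hY a ha b₂
      have m3 := hY a ha (b + b₂)
      have key : (fun x : F => Algebra.trace (ZMod 3) F (b * x))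
          = (fun x : F => Algebra.trace (ZMod 3) F (a * x ^ 2)
              * Algebra.trace (ZMod 3) F (b * x)
              + (Algebra.trace (ZMod 3) F (b ^ 2 / a) - w a)
                * Algebra.trace (ZMod 3) F (b * x))
          + (fun x : F => Algebra.trace (ZMod 3) F (a * x ^ 2)
              * Algebra.trace (ZMod 3) F (b₂ * x)
              + (Algebra.trace (ZMod 3) F (b₂ ^ 2 / a) - w a)
                * Algebra.trace (ZMod 3) F (b₂ * x))
          + (2 : ZMod 3) • (fun x : F => Algebra.trace (ZMod 3) F (a * x ^ 2)
              * Algebra.trace (ZMod 3) F ((b + b₂) * x)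
              + (Algebra.trace (ZMod 3) F ((b + b₂) ^ 2 / a) - w a)
                * Algebra.trace (ZMod 3) F ((b + b₂) * x)) := by
        funext x
        have e1 : (b + b₂) * x = b * x + b₂ * x := by ring
        simp only [Pi.add_apply, Pi.smul_apply, smul_eq_mul, e1, map_add, hT13, hT23]
        clear hT13 hT23 m1 m2 m3 hqq1 hqq2
        generalize Algebra.trace (ZMod 3) F (a * x ^ 2) = s
        generalize Algebra.trace (ZMod 3) F (b * x) = r₁
        generalize Algebra.trace (ZMod 3) F (b₂ * x) = r₂
        generalize Algebra.trace (ZMod 3) F ((b + b₂) ^ 2 / a) = T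
        generalize w a = W
        revert s r₁ r₂ T W
        decide
      rw [key]
      exact add_mem (add_mem m1 m2) (Submodule.smul_mem _ _ m3)
  -- type 2 generators
  have hG2 : ∀ a b : F, (fun x : F => Algebra.trace (ZMod 3) F (a * x ^ 2)
      * Algebra.trace (ZMod 3) F (b * x)) ∈ Submodule.span (ZMod 3) SL := by
    intro a b
    by_cases ha : a = 0
    · subst ha
      have hz : (fun x : F => Algebra.trace (ZMod 3) F ((0 : F) * x ^ 2)
          * Algebra.trace (ZMod 3) F (b * x)) = (0 : F → ZMod 3) := by
        funext x
        simp
      rw [hz]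
      exact Submodule.zero_mem _
    · have m1 := hY a ha b
      have m2 := hBlin b
      have key : (fun x : F => Algebra.trace (ZMod 3) F (a * x ^ 2)
            * Algebra.trace (ZMod 3) F (b * x))
          = (fun x : F => Algebra.trace (ZMod 3) F (a * x ^ 2)
              * Algebra.trace (ZMod 3) F (b * x)
              + (Algebra.trace (ZMod 3) F (b ^ 2 / a) - w a)
                * Algebra.trace (ZMod 3) F (b * x))
          + (w a - Algebra.trace (ZMod 3) F (b ^ 2 / a))
              • (fun x : F => Algebra.trace (ZMod 3) F (b * x)) := by
        funext x
        simp only [Pi.add_apply, Pi.smul_apply, smul_eq_mul]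
        ring
      rw [key]
      exact add_mem m1 (Submodule.smul_mem _ _ m2)
  -- conclude
  intro f hf
  simp only [Set.mem_union, Set.mem_setOf_eq, Set.mem_singleton_iff] at hf
  rcases hf with ((((⟨a, b, rfl⟩ | ⟨a, b, rfl⟩) | ⟨a, b, rfl⟩) | ⟨b, rfl⟩) | rfl)
  · exact hA2 a b
  · exact hG2 a b
  · exact hBB a b
  · exact hBlin b
  · exact hone


/-- for odd `m ≥ 5`, the ternary code spanned by the incidence vectors of
the supports of the minimum-weight codewords of `C(m,3)` equals the `GF(3)`-span of the
functions `Tr(ax²)Tr(bx²)`, `Tr(ax²)Tr(bx)`, `Tr(ax)Tr(bx)`, `Tr(bx)`, `1`. -/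
theorem code_of_design_eq_span (m : ℕ) (hm : 5 ≤ m) (hmodd : Odd m)
    (F : Type) [Field F] [Fintype F] [DecidableEq F] [Algebra (ZMod 3) F]
    (hF : Fintype.card F = 3 ^ m) :
    Submodule.span (ZMod 3)
      {v : F → ZMod 3 | ∃ c : F → ZMod 3,
        (∃ a b : F, ∃ h : ZMod 3,
          c = fun x => Algebra.trace (ZMod 3) F (a * x ^ 2 + b * x) + h) ∧
        (Finset.univ.filter fun x : F => c x ≠ 0).card =
          2 * 3 ^ (m - 1) - 3 ^ ((m - 1) / 2) ∧
        v = fun x => if c x ≠ 0 then 1 else 0} =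
    Submodule.span (ZMod 3)
      ({f : F → ZMod 3 | ∃ a b : F, f = fun x =>
          Algebra.trace (ZMod 3) F (a * x ^ 2) * Algebra.trace (ZMod 3) F (b * x ^ 2)} ∪
       {f : F → ZMod 3 | ∃ a b : F, f = fun x =>
          Algebra.trace (ZMod 3) F (a * x ^ 2) * Algebra.trace (ZMod 3) F (b * x)} ∪
       {f : F → ZMod 3 | ∃ a b : F, f = fun x =>
          Algebra.trace (ZMod 3) F (a * x) * Algebra.trace (ZMod 3) F (b * x)} ∪
       {f : F → ZMod 3 | ∃ b : F, f = fun x => Algebra.trace (ZMod 3) F (b * x)} ∪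
       {fun _ => 1}) := by
  apply le_antisymm
  · exact forward_incl F m hF
  · exact reverse_incl F m hm hmodd hF
end

section
/- Let m ≥ 5 be odd. The code C₃(D_d(C(m,3))) is a subcode of the fourth-order generalized Reed-Muller code R₃(4, m) over GF(3), and hence its minimum distance is at least 3^{m−2}. -/
open Finset

namespace GRM19

abbrev K := ZMod 3

noncomputable def Nwt (n : ℕ) (f : (Fin n → K) → K) : ℕ :=
  (Finset.univ.filter fun x => f x ≠ 0).card

def Deg (n d : ℕ) (f : (Fin n → K) → K) : Prop :=
  ∃ p : MvPolynomial (Fin n) K, p.totalDegree ≤ d ∧ ∀ x, f x = MvPolynomial.eval x p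

def W : ℕ → ℕ → ℕ
  | 0, m => 3 ^ m
  | 1, 0 => 1
  | 1, m + 1 => 2 * 3 ^ m
  | 2, 0 => 1
  | 2, m + 1 => 3 ^ m
  | 3, 0 => 1
  | 3, 1 => 1
  | 3, m + 2 => 2 * 3 ^ m
  | 4, 0 => 1
  | 4, 1 => 1
  | 4, m + 2 => 3 ^ m
  | _ + 5, _ => 0

lemma W_zero_le (d : ℕ) (hd : d ≤ 4) : W d 0 ≤ 1 := by
  interval_cases d <;> simp [W]

lemma WA (d n : ℕ) (hd : d ≤ 4) : W d (n + 1) ≤ 3 * W d n := by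
  interval_cases d <;> rcases n with _ | _ | n <;> simp [W, pow_succ] <;> ring_nf <;> omega

lemma WB (d n : ℕ) (h1 : 1 ≤ d) (hd : d ≤ 4) : W d (n + 1) ≤ 2 * W (d - 1) n := by
  interval_cases d <;> rcases n with _ | _ | n <;> simp [W, pow_succ] <;>
    nlinarith [Nat.one_le_two_pow (n := n),
      Nat.one_le_iff_ne_zero.mpr (pow_ne_zero n (three_ne_zero (α := ℕ)))]

lemma WC (d n : ℕ) (h2 : 2 ≤ d) (hd : d ≤ 4) : W d (n + 1) ≤ W (d - 2) n := by
  interval_cases d <;> rcases n with _ | _ | n <;> simp [W, pow_succ] <;>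
    nlinarith [Nat.one_le_iff_ne_zero.mpr (pow_ne_zero n (three_ne_zero (α := ℕ)))]

lemma Deg.mono {n d d' : ℕ} (h : d ≤ d') {f} (hf : Deg n d f) : Deg n d' f := by
  obtain ⟨p, hp, he⟩ := hf; exact ⟨p, hp.trans h, he⟩

lemma Deg.combo {n d : ℕ} {f g : (Fin n → K) → K} (c : K)
    (hf : Deg n d f) (hg : Deg n d g) : Deg n d (fun x => f x + c * g x) := by
  obtain ⟨p, hp, hep⟩ := hf; obtain ⟨q, hq, heq⟩ := hg
  refine ⟨p + MvPolynomial.C c * q, ?_, fun x => by simp [hep, heq]⟩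
  refine (MvPolynomial.totalDegree_add _ _).trans (max_le hp ?_)
  exact ((MvPolynomial.totalDegree_mul _ _).trans
    (by simp [MvPolynomial.totalDegree_C])).trans hq

lemma zmod3_pow3 : ∀ a : ZMod 3, a ^ 3 = a := by decide
lemma zmod3_pow4 : ∀ a : ZMod 3, a ^ 4 = a ^ 2 := by decide

lemma slices {n d : ℕ} (hd : d ≤ 4) {f : (Fin (n + 1) → K) → K} (hf : Deg (n + 1) d f) :
    ∃ g0 g1 g2 : (Fin n → K) → K,
      Deg n d g0 ∧ Deg n (d - 1) g1 ∧ Deg n (d - 2) g2 ∧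
      (∀ a x, f (Fin.cons a x) = g0 x + a * g1 x + a ^ 2 * g2 x) ∧
      (d = 0 → g1 = 0) ∧ (d ≤ 1 → g2 = 0) := by
  obtain ⟨p, hp, hep⟩ := hf
  set q := MvPolynomial.finSuccEquiv K n p with hq
  have hcoeff : ∀ k, (q.coeff k).totalDegree + k ≤ d ∨ q.coeff k = 0 := by
    intro k
    by_cases h : q.coeff k = 0
    · exact Or.inr h
    · exact Or.inl ((MvPolynomial.totalDegree_coeff_finSuccEquiv_add_le p k h).trans hp)
  have hdegk : ∀ k, (q.coeff k).totalDegree ≤ d - k := by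
    intro k; rcases hcoeff k with h | h
    · omega
    · simp [h]
  have hzero : ∀ k, d < k → q.coeff k = 0 := by
    intro k hk; rcases hcoeff k with h | h
    · omega
    · exact h
  have hnd : q.natDegree ≤ 4 := Polynomial.natDegree_le_iff_coeff_eq_zero.mpr
    (fun N hN => hzero N (by omega))
  refine ⟨fun x => MvPolynomial.eval x (q.coeff 0),
    fun x => MvPolynomial.eval x (q.coeff 1) + MvPolynomial.eval x (q.coeff 3),
    fun x => MvPolynomial.eval x (q.coeff 2) + MvPolynomial.eval x (q.coeff 4),
    ⟨q.coeff 0, by simpa using hdegk 0, fun x => rfl⟩,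
    ⟨q.coeff 1 + q.coeff 3, ?_, fun x => by simp⟩,
    ⟨q.coeff 2 + q.coeff 4, ?_, fun x => by simp⟩, ?_, ?_, ?_⟩
  · exact (MvPolynomial.totalDegree_add _ _).trans
      (max_le (hdegk 1) ((hdegk 3).trans (by omega)))
  · exact (MvPolynomial.totalDegree_add _ _).trans
      (max_le (hdegk 2) ((hdegk 4).trans (by omega)))
  · intro a x
    rw [hep, MvPolynomial.eval_eq_eval_mv_eval']
    have hnd' : (Polynomial.map (MvPolynomial.eval x) q).natDegree < 5 :=
      lt_of_le_of_lt Polynomial.natDegree_map_le (by omega : q.natDegree < 5)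
    rw [Polynomial.eval_eq_sum_range' hnd']
    simp only [Finset.sum_range_succ, Finset.sum_range_zero, Polynomial.coeff_map]
    rw [zmod3_pow3 a, zmod3_pow4 a]
    ring
  · intro h0
    have h1 := hzero 1 (by omega); have h3 := hzero 3 (by omega)
    funext x; simp [h1, h3]
  · intro h1'
    have h2 := hzero 2 (by omega); have h4 := hzero 4 (by omega)
    funext x; simp [h2, h4]

lemma Nwt_succ (n : ℕ) (f : (Fin (n + 1) → K) → K) :
    Nwt (n + 1) f = ∑ a : K, Nwt n (fun x => f (Fin.cons a x)) := by
  classical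
  simp only [Nwt, Finset.card_filter]
  rw [← Fintype.sum_equiv (Fin.consEquiv (fun _ : Fin (n + 1) => K))
    (fun y => if f (Fin.cons y.1 y.2) ≠ 0 then 1 else 0)
    (fun y => if f y ≠ 0 then 1 else 0) (fun y => rfl)]
  rw [Fintype.sum_prod_type]

lemma Nwt_unit (n : ℕ) (c : K) (hc : c ≠ 0) (f : (Fin n → K) → K) :
    Nwt n (fun x => c * f x) = Nwt n f := by
  unfold Nwt
  congr 1
  apply Finset.filter_congr
  intro x _
  simp [mul_eq_zero, hc]

lemma Nwt_pos (n : ℕ) {f : (Fin n → K) → K} (hf : f ≠ 0) : 1 ≤ Nwt n f := by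
  obtain ⟨x, hx⟩ := Function.ne_iff.mp hf
  exact Finset.card_pos.mpr ⟨x, by simpa using hx⟩

lemma zmod3_univ (a : K) : (Finset.univ : Finset K) = {a, a + 1, a + 2} := by
  revert a; decide

lemma zmod3_ne1 (a : K) : a + 1 ≠ a := by revert a; decide
lemma zmod3_ne2 (a : K) : a + 2 ≠ a := by revert a; decide

lemma sum_zmod3 (t : K → ℕ) (a : K) :
    ∑ y : K, t y = t a + t (a + 1) + t (a + 2) := by
  rw [zmod3_univ a]
  rw [Finset.sum_insert (by revert a; decide), Finset.sum_insert (by revert a; decide),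
    Finset.sum_singleton]
  ring

lemma zmod3_third : ∀ a b : ZMod 3, b ≠ a →
    ((-a - b) - b ≠ 0 ∧ (-a - b) - a ≠ 0 ∧ ∀ y : ZMod 3, y = a ∨ y = b ∨ y = -a - b) := by
  decide

lemma main_bound : ∀ n d (f : (Fin n → K) → K), d ≤ 4 → Deg n d f → f ≠ 0 → W d n ≤ Nwt n f := by
  intro n
  induction n with
  | zero => intro d f hd _ hf; exact (W_zero_le d hd).trans (Nwt_pos 0 hf)
  | succ n ih =>
    intro d f hd hfdeg hf0
    obtain ⟨g0, g1, g2, hg0, hg1, hg2, hfa, hd0, hd1⟩ := slices hd hfdeg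
    rw [Nwt_succ]
    by_cases hex : ∃ a : K, ∀ x, f (Fin.cons a x) = 0
    · obtain ⟨a, ha⟩ := hex
      have hzero : ∀ x, g0 x + a * g1 x + a ^ 2 * g2 x = 0 := fun x => by
        rw [← hfa]; exact ha x
      have hfact : ∀ b x, f (Fin.cons b x) = (b - a) * (g1 x + (b + a) * g2 x) := by
        intro b x; rw [hfa]; linear_combination hzero x
      by_cases hd0' : d = 0
      · exact absurd (funext fun y => by
          rw [← Fin.cons_self_tail y, hfact]
          simp [hd0 hd0', hd1 (by omega)]) hf0
      by_cases hbex : ∃ b : K, b ≠ a ∧ ∀ x, g1 x + (b + a) * g2 x = 0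
      · obtain ⟨b, hba, hb0⟩ := hbex
        by_cases hd1' : d ≤ 1
        · refine absurd (funext fun y => ?_) hf0
          have hg20 := hd1 hd1'
          have hg10 : ∀ x, g1 x = 0 := fun x => by
            have := hb0 x; simpa [hg20] using this
          rw [← Fin.cons_self_tail y, hfact]
          simp [hg20, hg10]
        · obtain ⟨hcb, hca, _⟩ := zmod3_third a b hba
          set c : K := -a - b with hc
          have hfc : ∀ x, f (Fin.cons c x) = ((c - a) * (c - b)) * g2 x := by
            intro x; rw [hfact]; linear_combination (c - a) * hb0 x
          have hg2ne : g2 ≠ 0 := by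
            intro h20
            have hg10 : ∀ x, g1 x = 0 := fun x => by
              have := hb0 x; simpa [h20] using this
            exact hf0 (funext fun y => by
              rw [← Fin.cons_self_tail y, hfact]; simp [h20, hg10])
          have hNc : W (d - 2) n ≤ Nwt n (fun x => f (Fin.cons c x)) := by
            have heq : (fun x => f (Fin.cons c x))
                = fun x => ((c - a) * (c - b)) * g2 x := funext hfc
            rw [heq, Nwt_unit _ _ (mul_ne_zero hca hcb)]
            exact ih (d - 2) g2 (by omega) hg2 hg2ne
          have hsingle : Nwt n (fun x => f (Fin.cons c x))
              ≤ ∑ y : K, Nwt n (fun x => f (Fin.cons y x)) :=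
            Finset.single_le_sum (f := fun y : K => Nwt n fun x => f (Fin.cons y x))
              (fun _ _ => Nat.zero_le _) (Finset.mem_univ c)
          have := WC d n (by omega) hd
          omega
      · push_neg at hbex
        have hNb : ∀ b : K, b ≠ a → W (d - 1) n ≤ Nwt n (fun x => f (Fin.cons b x)) := by
          intro b hbne
          have heq : (fun x => f (Fin.cons b x))
              = fun x => (b - a) * (g1 x + (b + a) * g2 x) := funext (hfact b)
          rw [heq, Nwt_unit _ _ (sub_ne_zero.mpr hbne)]
          refine ih (d - 1) _ (by omega) (Deg.combo (b + a) hg1 (hg2.mono (by omega))) ?_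
          obtain ⟨x, hx⟩ := hbex b hbne
          intro hcon
          exact hx (by simpa using congrFun hcon x)
        rw [sum_zmod3 _ a]
        have h1 := hNb (a + 1) (zmod3_ne1 a)
        have h2 := hNb (a + 2) (zmod3_ne2 a)
        have := WB d n (by omega) hd
        omega
    · push_neg at hex
      have hbound : ∀ a : K, W d n ≤ Nwt n (fun x => f (Fin.cons a x)) := by
        intro a
        have hdg : Deg n d (fun x => f (Fin.cons a x)) := by
          have h1 : Deg n d (fun x => g1 x + a * g2 x) :=
            Deg.combo a (hg1.mono (by omega)) (hg2.mono (by omega))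
          have h2 : Deg n d (fun x => g0 x + a * (g1 x + a * g2 x)) :=
            Deg.combo a hg0 h1
          have heq : (fun x => f (Fin.cons a x))
              = fun x => g0 x + a * (g1 x + a * g2 x) :=
            funext fun x => by rw [hfa]; ring
          rwa [heq]
        refine ih d _ hd hdg ?_
        obtain ⟨x, hx⟩ := hex a
        intro hcon
        exact hx (by simpa using congrFun hcon x)
      calc W d (n + 1) ≤ 3 * W d n := WA d n hd
        _ = ∑ _a : K, W d n := by
            rw [Finset.sum_const, Finset.card_univ]
            simp [ZMod.card]
        _ ≤ _ := Finset.sum_le_sum fun a _ => hbound a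

lemma gen_repr (m : ℕ) (F : Type) [Field F] [Fintype F] [DecidableEq F] [Algebra K F]
    (e : Module.Basis (Fin m) K F) (a b : F) (h : K) :
    ∃ q : MvPolynomial (Fin m) K, q.totalDegree ≤ 2 ∧
      ∀ y : F, Algebra.trace K F (a * y ^ 2 + b * y) + h
        = MvPolynomial.eval (fun i => e.repr y i) q := by
  classical
  refine ⟨(∑ i : Fin m, ∑ j : Fin m,
      MvPolynomial.C (Algebra.trace K F (a * e i * e j)) * (MvPolynomial.X i * MvPolynomial.X j))
    + ((∑ i : Fin m, MvPolynomial.C (Algebra.trace K F (b * e i)) * MvPolynomial.X i)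
    + MvPolynomial.C h), ?_, ?_⟩
  · refine (MvPolynomial.totalDegree_add _ _).trans (max_le ?_ ?_)
    · refine (MvPolynomial.totalDegree_finset_sum _ _).trans (Finset.sup_le fun i _ => ?_)
      refine (MvPolynomial.totalDegree_finset_sum _ _).trans (Finset.sup_le fun j _ => ?_)
      refine (MvPolynomial.totalDegree_mul _ _).trans ?_
      have h2 := MvPolynomial.totalDegree_mul (MvPolynomial.X i (R := K)) (MvPolynomial.X j)
      simp only [MvPolynomial.totalDegree_C, MvPolynomial.totalDegree_X] at h2 ⊢
      omega
    · refine (MvPolynomial.totalDegree_add _ _).trans (max_le ?_ ?_)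
      · refine (MvPolynomial.totalDegree_finset_sum _ _).trans (Finset.sup_le fun i _ => ?_)
        refine (MvPolynomial.totalDegree_mul _ _).trans ?_
        simp [MvPolynomial.totalDegree_C, MvPolynomial.totalDegree_X]
      · simp [MvPolynomial.totalDegree_C]
  · intro y
    set r : Fin m → K := fun i => e.repr y i with hr
    have hy : ∑ i : Fin m, r i • e i = y := e.sum_repr y
    have hexp : a * y ^ 2 + b * y
        = (∑ i : Fin m, ∑ j : Fin m, (r i * r j) • (a * e i * e j))
          + ∑ i : Fin m, r i • (b * e i) := by
      conv_lhs => rw [← hy]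
      rw [sq, Finset.sum_mul_sum, Finset.mul_sum, Finset.mul_sum]
      congr 1
      · refine Finset.sum_congr rfl fun i _ => ?_
        rw [Finset.mul_sum]
        refine Finset.sum_congr rfl fun j _ => ?_
        rw [smul_mul_smul_comm, mul_smul_comm, mul_assoc]
      · refine Finset.sum_congr rfl fun i _ => ?_
        rw [mul_smul_comm]
    rw [hexp]
    simp only [map_add, map_sum, map_smul, smul_eq_mul, map_mul, MvPolynomial.eval_C,
      MvPolynomial.eval_X]
    rw [← add_assoc]
    refine congrArg (· + h) (congrArg₂ (· + ·) ?_ ?_)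
    · exact Finset.sum_congr rfl fun i _ => Finset.sum_congr rfl fun j _ => by ring
    · exact Finset.sum_congr rfl fun i _ => by ring

lemma zmod3_indicator : ∀ z : ZMod 3, (if z ≠ 0 then (1 : ZMod 3) else 0) = z * z := by
  decide

end GRM19

open GRM19 in
/-- for odd `m ≥ 5`, the code spanned by the incidence vectors of the
supports of minimum-weight codewords of `C(m,3)` is a subcode of the 4th-order
generalized Reed-Muller code `R₃(4,m)` (every codeword is the evaluation of an
`m`-variate polynomial over `GF(3)` of total degree at most `4`, with respect to any
`GF(3)`-basis of `GF(3^m)`), and hence its minimum distance is at least `3^(m-2)`. -/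
theorem code_subcode_of_GRM (m : ℕ) (hm : 5 ≤ m) (hmodd : Odd m)
    (F : Type) [Field F] [Fintype F] [DecidableEq F] [Algebra (ZMod 3) F]
    (hF : Fintype.card F = 3 ^ m)
    (e : Module.Basis (Fin m) (ZMod 3) F) :
    ∀ v : F → ZMod 3,
      v ∈ Submodule.span (ZMod 3)
        {v : F → ZMod 3 | ∃ c : F → ZMod 3,
          (∃ a b : F, ∃ h : ZMod 3,
            c = fun x => Algebra.trace (ZMod 3) F (a * x ^ 2 + b * x) + h) ∧
          (Finset.univ.filter fun x : F => c x ≠ 0).card =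
            2 * 3 ^ (m - 1) - 3 ^ ((m - 1) / 2) ∧
          v = fun x => if c x ≠ 0 then 1 else 0} →
      (∃ p : MvPolynomial (Fin m) (ZMod 3), p.totalDegree ≤ 4 ∧
        ∀ y : F, v y = MvPolynomial.eval (fun i => e.repr y i) p) ∧
      (v ≠ 0 → 3 ^ (m - 2) ≤ (Finset.univ.filter fun x : F => v x ≠ 0).card) := by
  classical
  intro v hv
  -- the submodule of functions represented by polynomials of total degree at most 4
  set S : Submodule (ZMod 3) (F → ZMod 3) :=
    { carrier := {w | ∃ p : MvPolynomial (Fin m) (ZMod 3), p.totalDegree ≤ 4 ∧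
        ∀ y : F, w y = MvPolynomial.eval (fun i => e.repr y i) p}
      add_mem' := by
        rintro w₁ w₂ ⟨p, hp, hep⟩ ⟨q, hq, heq⟩
        refine ⟨p + q, (MvPolynomial.totalDegree_add _ _).trans (max_le hp hq), fun y => ?_⟩
        simp [hep y, heq y]
      zero_mem' := ⟨0, by simp, fun y => by simp⟩
      smul_mem' := by
        rintro c w ⟨p, hp, hep⟩
        refine ⟨MvPolynomial.C c * p, ?_, fun y => ?_⟩
        · exact ((MvPolynomial.totalDegree_mul _ _).trans
            (by simp [MvPolynomial.totalDegree_C])).trans hp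
        · simp [hep y, Pi.smul_apply] } with hS
  have hgen : {w : F → ZMod 3 | ∃ c : F → ZMod 3,
      (∃ a b : F, ∃ h : ZMod 3,
        c = fun x => Algebra.trace (ZMod 3) F (a * x ^ 2 + b * x) + h) ∧
      (Finset.univ.filter fun x : F => c x ≠ 0).card =
        2 * 3 ^ (m - 1) - 3 ^ ((m - 1) / 2) ∧
      w = fun x => if c x ≠ 0 then 1 else 0} ⊆ S := by
    rintro w ⟨c, ⟨a, b, h, hc⟩, -, hw⟩
    obtain ⟨q, hq2, hqe⟩ := gen_repr m F e a b h
    refine ⟨q * q, ?_, fun y => ?_⟩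
    · exact (MvPolynomial.totalDegree_mul _ _).trans (by omega)
    · rw [hw]
      have : c y = MvPolynomial.eval (fun i => e.repr y i) q := by rw [hc]; exact hqe y
      simp only [map_mul, ← this]
      exact zmod3_indicator (c y)
  have hvS : v ∈ S := Submodule.span_le.mpr hgen hv
  obtain ⟨p, hp4, hpe⟩ := hvS
  refine ⟨⟨p, hp4, hpe⟩, fun hv0 => ?_⟩
  set f : (Fin m → ZMod 3) → ZMod 3 := fun z => MvPolynomial.eval z p with hf
  have hfeq : ∀ y : F, v y = f (e.equivFun y) := fun y => by
    rw [hpe y]; simp [hf, Module.Basis.equivFun_apply]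
  have hfne : f ≠ 0 := by
    obtain ⟨y, hy⟩ := Function.ne_iff.mp hv0
    intro hcon
    exact hy (by rw [hfeq y, hcon]; rfl)
  have hcard : (Finset.univ.filter fun x : F => v x ≠ 0).card = Nwt m f := by
    unfold Nwt
    apply Finset.card_bij (fun y _ => e.equivFun y)
    · intro y hy
      simp only [Finset.mem_filter, Finset.mem_univ, true_and] at hy ⊢
      rw [← hfeq y]; exact hy
    · intro y1 _ y2 _ hxy
      exact e.equivFun.injective hxy
    · intro z hz
      simp only [Finset.mem_filter, Finset.mem_univ, true_and] at hz
      have hzz : e.equivFun (e.equivFun.symm z) = z := e.equivFun.apply_symm_apply z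
      refine ⟨e.equivFun.symm z, ?_, hzz⟩
      simp only [Finset.mem_filter, Finset.mem_univ, true_and]
      rw [hfeq (e.equivFun.symm z), hzz]
      exact hz
  rw [hcard]
  have hmain := main_bound m 4 f (le_refl 4) ⟨p, hp4, fun _ => rfl⟩ hfne
  obtain ⟨k, rfl⟩ : ∃ k, m = k + 2 := ⟨m - 2, by omega⟩
  simpa [W, Nat.add_sub_cancel] using hmain
end
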